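/- arXiv:2511.01396 — 4 statements merged into one kernel-verified Lean document; each statement's English description precedes it below -/
import Mathlib

section
/- Let G be an ADMG and let X, Y, Z be pairwise disjoint subsets of its vertices. Then X and Y are d-connected given Z in G if and only if G contains a structure of interest σ (as a subgraph) that connects X and Y under Z. -/
/-!  Mixed graphs, ADMGs, d-separation, structures of interest, and cluster DAGs
(following Anand et al. and the cyclic C-DAG extension). -/

/-- The way an edge is traversed along a path: `fwd` = directed edge pointing
towards the right endpoint, `bwd` = directed edge pointing towards the left
endpoint, `both` = bidirected edge (arrowheads at both endpoints). -/
inductive Link : Type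
  | fwd
  | bwd
  | both
  deriving DecidableEq

/-- Is there an arrowhead at the right endpoint of the link? -/
def Link.headRight : Link → Bool
  | .fwd => true
  | .bwd => false
  | .both => true

/-- Is there an arrowhead at the left endpoint of the link? -/
def Link.headLeft : Link → Bool
  | .fwd => false
  | .bwd => true
  | .both => true

/-- A mixed graph on a vertex set `verts`: a set of directed edges and a
(symmetric) set of bidirected edges, all between vertices of `verts`. -/
structure MixedGraph (V : Type*) where
  verts : Set V
  dir : V → V → Prop
  bi : V → V → Prop
  dir_mem : ∀ ⦃a b : V⦄, dir a b → a ∈ verts ∧ b ∈ verts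
  bi_mem : ∀ ⦃a b : V⦄, bi a b → a ∈ verts ∧ b ∈ verts
  bi_symm : ∀ ⦃a b : V⦄, bi a b → bi b a

namespace MixedGraph

variable {V C : Type*}

/-- `G.Anc v w` : there is a directed path from `v` to `w`
(`v` is an ancestor of `w`, `w` a descendant of `v`). -/
def Anc (G : MixedGraph V) : V → V → Prop := Relation.ReflTransGen G.dir

/-- The set of ancestors of the set `Z` in `G`. -/
def AncSet (G : MixedGraph V) (Z : Set V) : Set V := {v | ∃ z ∈ Z, G.Anc v z}

/-- The directed part of `G` has no directed cycle. -/
def Acyclic (G : MixedGraph V) : Prop := ∀ ⦃a b : V⦄, G.dir a b → ¬ G.Anc b a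

/-- An acyclic directed mixed graph: no directed cycle, and all edges join
distinct vertices. -/
def IsADMG (G : MixedGraph V) : Prop :=
  G.Acyclic ∧ (∀ v, ¬ G.dir v v) ∧ (∀ v, ¬ G.bi v v)

/-- `H` is a subgraph of `G`. -/
def IsSubgraph (H G : MixedGraph V) : Prop :=
  H.verts ⊆ G.verts ∧ (∀ ⦃a b : V⦄, H.dir a b → G.dir a b) ∧
    (∀ ⦃a b : V⦄, H.bi a b → G.bi a b)

/-- Adjacency, viewing all edges as undirected. -/
def Adj (G : MixedGraph V) (a b : V) : Prop := G.dir a b ∨ G.dir b a ∨ G.bi a b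

/-- `G` has a single connected component (viewing all edges as undirected). -/
def Connected (G : MixedGraph V) : Prop :=
  G.verts.Nonempty ∧ ∀ a ∈ G.verts, ∀ b ∈ G.verts, Relation.ReflTransGen G.Adj a b

/-- A root: a vertex with no outgoing directed edge. -/
def IsRoot (G : MixedGraph V) (v : V) : Prop := v ∈ G.verts ∧ ∀ w, ¬ G.dir v w

/-- The set of roots of `G`. -/
def roots (G : MixedGraph V) : Set V := {v | G.IsRoot v}

/-- A structure of interest: an ADMG with a single connected component in which
every vertex has at most one outgoing directed edge, or exactly two outgoing
directed edges and no edge with an arrowhead at it. -/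
def IsSOI (σ : MixedGraph V) : Prop :=
  σ.IsADMG ∧ σ.Connected ∧
    ∀ v ∈ σ.verts,
      (∀ ⦃w₁ w₂ : V⦄, σ.dir v w₁ → σ.dir v w₂ → w₁ = w₂) ∨
      ((∃ w₁ w₂, w₁ ≠ w₂ ∧ σ.dir v w₁ ∧ σ.dir v w₂ ∧
          ∀ w, σ.dir v w → w = w₁ ∨ w = w₂) ∧
        (∀ w, ¬ σ.dir w v) ∧ (∀ w, ¬ σ.bi v w))

/-- A structure of interest `σ` (as a subgraph of the ambient graph) connects
`X` and `Y` under `Z`: it contains a vertex of `X` and a vertex of `Y`, its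
roots lie in `X ∪ Y ∪ Z`, and no non-root vertex of `σ` lies in `Z`. -/
def Connects (σ : MixedGraph V) (X Y Z : Set V) : Prop :=
  (σ.verts ∩ X).Nonempty ∧ (σ.verts ∩ Y).Nonempty ∧
    σ.roots ⊆ X ∪ Y ∪ Z ∧ ∀ v ∈ σ.verts, ¬ σ.IsRoot v → v ∉ Z

/-- The link `l` joins `a` (left) to `b` (right) in `G`. -/
def LinkOk (G : MixedGraph V) (a : V) (l : Link) (b : V) : Prop :=
  match l with
  | .fwd => G.dir a b
  | .bwd => G.dir b a
  | .both => G.bi a b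

/-- A walk from `a`, given as the list of successive (link, next vertex) steps. -/
inductive IsWalk (G : MixedGraph V) : V → List (Link × V) → Prop
  | nil (v : V) : IsWalk G v []
  | cons {a b : V} {l : Link} {rest : List (Link × V)} :
      G.LinkOk a l b → IsWalk G b rest → IsWalk G a ((l, b) :: rest)

/-- The vertices visited by a walk. -/
def pathVerts (a : V) (steps : List (Link × V)) : List V := a :: steps.map Prod.snd

/-- The last vertex of a walk. -/
def lastVert (a : V) (steps : List (Link × V)) : V := (steps.map Prod.snd).getLastD a

/-- A path: a walk visiting pairwise distinct vertices. -/
def IsPath (G : MixedGraph V) (a : V) (steps : List (Link × V)) : Prop :=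
  G.IsWalk a steps ∧ (pathVerts a steps).Nodup

/-- Activity of the interior vertex `v`, flanked by links `l₁` and `l₂`,
relative to `Z` : if `v` is a collider it must be an ancestor of `Z`
(in particular possibly in `Z`), otherwise it must avoid `Z`. -/
def ActiveTriple (G : MixedGraph V) (Z : Set V) (l₁ : Link) (v : V) (l₂ : Link) : Prop :=
  if l₁.headRight && l₂.headLeft then v ∈ G.AncSet Z else v ∉ Z

/-- `X` and `Y` are d-connected given `Z` in `G`: some path from a vertex of
`X` to a vertex of `Y` is active given `Z`. -/
def DConnected (G : MixedGraph V) (X Y Z : Set V) : Prop :=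
  ∃ (a : V) (steps : List (Link × V)),
    G.IsPath a steps ∧ a ∈ X ∧ lastVert a steps ∈ Y ∧
    a ∉ Z ∧ lastVert a steps ∉ Z ∧
    List.Chain' (fun s t => G.ActiveTriple Z s.1 s.2 t.1) steps

/-- The mutilated graph `G_{Ā,B̲}` : every edge with an arrowhead at a vertex
of `A` and every directed edge out of a vertex of `B` is deleted. -/
def mutilate (G : MixedGraph V) (A B : Set V) : MixedGraph V where
  verts := G.verts
  dir a b := G.dir a b ∧ b ∉ A ∧ a ∉ B
  bi a b := G.bi a b ∧ a ∉ A ∧ b ∉ A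
  dir_mem := fun _ _ h => G.dir_mem h.1
  bi_mem := fun _ _ h => G.bi_mem h.1
  bi_symm := fun _ _ h => ⟨G.bi_symm h.1, h.2.2, h.2.1⟩

/-- Union of two mixed graphs. -/
def union (G H : MixedGraph V) : MixedGraph V where
  verts := G.verts ∪ H.verts
  dir a b := G.dir a b ∨ H.dir a b
  bi a b := G.bi a b ∨ H.bi a b
  dir_mem := by
    rintro a b (h | h)
    · exact ⟨Or.inl (G.dir_mem h).1, Or.inl (G.dir_mem h).2⟩
    · exact ⟨Or.inr (H.dir_mem h).1, Or.inr (H.dir_mem h).2⟩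
  bi_mem := by
    rintro a b (h | h)
    · exact ⟨Or.inl (G.bi_mem h).1, Or.inl (G.bi_mem h).2⟩
    · exact ⟨Or.inr (H.bi_mem h).1, Or.inr (H.bi_mem h).2⟩
  bi_symm := by
    rintro a b (h | h)
    · exact Or.inl (G.bi_symm h)
    · exact Or.inr (H.bi_symm h)

/-- Add the directed edge `x → y`. -/
def addDir (G : MixedGraph V) (x y : V) : MixedGraph V where
  verts := G.verts ∪ {x, y}
  dir a b := G.dir a b ∨ (a = x ∧ b = y)
  bi := G.bi
  dir_mem := by
    rintro a b (h | ⟨rfl, rfl⟩)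
    · exact ⟨Or.inl (G.dir_mem h).1, Or.inl (G.dir_mem h).2⟩
    · exact ⟨Or.inr (by simp), Or.inr (by simp)⟩
  bi_mem := fun _ _ h => ⟨Or.inl (G.bi_mem h).1, Or.inl (G.bi_mem h).2⟩
  bi_symm := fun _ _ h => G.bi_symm h

/-- Add the bidirected edge `x ↔ y`. -/
def addBi (G : MixedGraph V) (x y : V) : MixedGraph V where
  verts := G.verts ∪ {x, y}
  dir := G.dir
  bi a b := G.bi a b ∨ (a = x ∧ b = y) ∨ (a = y ∧ b = x)
  dir_mem := fun _ _ h => ⟨Or.inl (G.dir_mem h).1, Or.inl (G.dir_mem h).2⟩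
  bi_mem := by
    rintro a b (h | ⟨rfl, rfl⟩ | ⟨rfl, rfl⟩)
    · exact ⟨Or.inl (G.bi_mem h).1, Or.inl (G.bi_mem h).2⟩
    · exact ⟨Or.inr (by simp), Or.inr (by simp)⟩
    · exact ⟨Or.inr (by simp), Or.inr (by simp)⟩
  bi_symm := by
    rintro a b (h | ⟨rfl, rfl⟩ | ⟨rfl, rfl⟩)
    · exact Or.inl (G.bi_symm h)
    · exact Or.inr (Or.inr ⟨rfl, rfl⟩)
    · exact Or.inr (Or.inl ⟨rfl, rfl⟩)

/-- Delete the directed edge `x → y`. -/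
def deleteDir (G : MixedGraph V) (x y : V) : MixedGraph V where
  verts := G.verts
  dir a b := G.dir a b ∧ ¬(a = x ∧ b = y)
  bi := G.bi
  dir_mem := fun _ _ h => G.dir_mem h.1
  bi_mem := fun _ _ h => G.bi_mem h
  bi_symm := fun _ _ h => G.bi_symm h

/-- Delete the bidirected edge `x ↔ y`. -/
def deleteBi (G : MixedGraph V) (x y : V) : MixedGraph V where
  verts := G.verts
  dir := G.dir
  bi a b := G.bi a b ∧ ¬((a = x ∧ b = y) ∨ (a = y ∧ b = x))
  dir_mem := fun _ _ h => G.dir_mem h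
  bi_mem := fun _ _ h => G.bi_mem h.1
  bi_symm := fun _ _ h => ⟨G.bi_symm h.1, fun hc => h.2 (by tauto)⟩

/-- The cluster of micro-variables assigned to the cluster label `c`. -/
def clusterOf (π : V → C) (c : C) : Set V := {v | π v = c}

/-- `G` (an ADMG on all of `V`) is compatible with the cluster-level mixed
graph `GC` : `GC` is exactly the cluster graph induced by `G` via the
partition `π`. -/
def Compatible (π : V → C) (GC : MixedGraph C) (G : MixedGraph V) : Prop :=
  G.IsADMG ∧ G.verts = Set.univ ∧
    (∀ c d, GC.dir c d ↔ ∃ a b, π a = c ∧ π b = d ∧ G.dir a b) ∧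
    (∀ c d, GC.bi c d ↔ ∃ a b, π a = c ∧ π b = d ∧ G.bi a b)

/-- Within each cluster, the indices of the vertices (given by the ambient
linear order on `V`) follow a topological order of `G`. -/
def FollowsTopo [LinearOrder V] (π : V → C) (G : MixedGraph V) : Prop :=
  ∃ t : V → ℕ, Function.Injective t ∧ (∀ ⦃a b : V⦄, G.dir a b → t a < t b) ∧
    ∀ ⦃a b : V⦄, π a = π b → a < b → t a < t b

/-- The cluster `c` has cardinality at most one. -/
def SingletonCluster (π : V → C) (c : C) : Prop :=
  ∀ ⦃a b : V⦄, π a = c → π b = c → a = b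

/-- `GC` contains a directed cycle all of whose clusters have cardinality 1. -/
def HasSingletonCycle (π : V → C) (GC : MixedGraph C) : Prop :=
  ∃ c, Relation.TransGen
    (fun c₁ c₂ => GC.dir c₁ c₂ ∧ SingletonCluster π c₁ ∧ SingletonCluster π c₂) c c

/-- The canonical compatible graph of `GC` : all bidirected edges between the
relevant clusters; for self-loops all within-cluster edges following the index
order; for each directed edge between distinct clusters the edge from the
first vertex of the source to the last vertex of the target. -/
def canonicalGraph [LinearOrder V] (π : V → C) (GC : MixedGraph C) : MixedGraph V where
  verts := Set.univ
  dir a b :=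
    (π a = π b ∧ GC.dir (π a) (π b) ∧ a < b) ∨
    (π a ≠ π b ∧ GC.dir (π a) (π b) ∧
      IsLeast (clusterOf π (π a)) a ∧ IsGreatest (clusterOf π (π b)) b)
  bi a b := a ≠ b ∧ GC.bi (π a) (π b)
  dir_mem := fun _ _ _ => ⟨trivial, trivial⟩
  bi_mem := fun _ _ _ => ⟨trivial, trivial⟩
  bi_symm := fun _ _ h => ⟨h.1.symm, GC.bi_symm h.2⟩

/-- The unfolded graph of `GC` : the canonical compatible graph together with
all eligible directed edges, i.e. those corresponding to a cluster-level
directed edge whose addition to the canonical graph creates no directed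
cycle. -/
def unfoldedGraph [LinearOrder V] (π : V → C) (GC : MixedGraph C) : MixedGraph V where
  verts := Set.univ
  dir a b := (canonicalGraph π GC).dir a b ∨
    (GC.dir (π a) (π b) ∧ ((canonicalGraph π GC).addDir a b).Acyclic)
  bi a b := (canonicalGraph π GC).bi a b
  dir_mem := fun _ _ _ => ⟨trivial, trivial⟩
  bi_mem := fun _ _ _ => ⟨trivial, trivial⟩
  bi_symm := fun _ _ h => (canonicalGraph π GC).bi_symm h

/-- Failure of rule `i` of Pearl's calculus (atomically) in `G` :
`0` ↦ rule 1, `1` ↦ rule 2, `2` ↦ rule 3. -/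
def RuleFails (G : MixedGraph V) (W X Y Z : Set V) (i : Fin 3) : Prop :=
  if i = 0 then (G.mutilate W ∅).DConnected X Y (W ∪ Z)
  else if i = 1 then (G.mutilate W X).DConnected X Y (W ∪ Z)
  else (G.mutilate (W ∪ (X \ (G.mutilate W ∅).AncSet Z)) ∅).DConnected X Y (W ∪ Z)

end MixedGraph

open MixedGraph

open Classical

namespace MGAux

variable {α : Type*}

/-- consecutive pairs of a list -/
def pairs : List α → List (α × α)
  | a :: b :: rest => (a, b) :: pairs (b :: rest)
  | _ => []

@[simp] lemma pairs_nil : pairs ([] : List α) = [] := rfl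
@[simp] lemma pairs_single (a : α) : pairs [a] = [] := rfl
@[simp] lemma pairs_cons₂ (a b : α) (l : List α) :
    pairs (a :: b :: l) = (a, b) :: pairs (b :: l) := rfl

lemma mem_pairs_mem : ∀ {l : List α} {p : α × α}, p ∈ pairs l → p.1 ∈ l ∧ p.2 ∈ l
  | [], _, h => by simp [pairs] at h
  | [a], _, h => by simp [pairs] at h
  | a :: b :: rest, p, h => by
      rcases List.mem_cons.1 h with h | h
      · subst h; simp
      · have := mem_pairs_mem h
        exact ⟨List.mem_cons_of_mem _ this.1, List.mem_cons_of_mem _ this.2⟩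

lemma chain'_iff_pairs {r : α → α → Prop} :
    ∀ {l : List α}, List.Chain' r l ↔ ∀ p ∈ pairs l, r p.1 p.2
  | [] => by simp [List.Chain']
  | [a] => by simp [List.Chain']
  | a :: b :: rest => by
      rw [List.Chain', List.isChain_cons_cons, pairs_cons₂]
      constructor
      · rintro ⟨hr, hc⟩ p hp
        rcases List.mem_cons.1 hp with rfl | hp
        · exact hr
        · exact chain'_iff_pairs.1 hc p hp
      · intro h
        exact ⟨h _ (List.mem_cons_self), chain'_iff_pairs.2 fun p hp => h p (List.mem_cons_of_mem _ hp)⟩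

lemma mem_pairs_split : ∀ {l : List α} {x y : α}, (x, y) ∈ pairs l →
    ∃ l₁ l₂, l = l₁ ++ x :: y :: l₂
  | [], x, y, h => by simp [pairs] at h
  | [a], x, y, h => by simp [pairs] at h
  | a :: b :: rest, x, y, h => by
      rcases List.mem_cons.1 h with h | h
      · obtain ⟨rfl, rfl⟩ : x = a ∧ y = b := by
          have := Prod.mk.inj h; exact ⟨this.1, this.2⟩
        exact ⟨[], rest, rfl⟩
      · obtain ⟨l₁, l₂, hl⟩ := mem_pairs_split h
        exact ⟨a :: l₁, l₂, by simp [hl]⟩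

lemma pairs_append : ∀ (l₁ : List α) (a : α) (l₂ : List α),
    pairs (l₁ ++ a :: l₂) = pairs (l₁ ++ [a]) ++ pairs (a :: l₂)
  | [], a, l₂ => rfl
  | [b], a, l₂ => rfl
  | b :: c :: rest, a, l₂ => by
      have := pairs_append (c :: rest) a l₂
      simp only [List.cons_append, pairs_cons₂] at this ⊢
      rw [this]

lemma pairs_prefix : ∀ {l₁ l₂ : List α}, l₁ <+: l₂ → pairs l₁ <+: pairs l₂ := by
  rintro l₁ l₂ ⟨t, rfl⟩
  rcases t with _ | ⟨a, t⟩
  · simp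
  · rcases List.eq_nil_or_concat l₁ with rfl | ⟨l₀, b, rfl⟩
    · simp
    · rw [List.concat_eq_append, List.append_assoc, List.singleton_append,
        pairs_append l₀ b (a :: t)]
      exact ⟨_, rfl⟩

lemma pairs_suffix : ∀ {l₁ l₂ : List α}, l₁ <:+ l₂ → pairs l₁ <:+ pairs l₂ := by
  rintro l₁ l₂ ⟨t, rfl⟩
  rcases l₁ with _ | ⟨a, l₁⟩
  · simp
  · rw [pairs_append t a l₁]
    exact ⟨_, rfl⟩

end MGAux
namespace MixedGraph

open MGAux

variable {V : Type*}

@[simp] lemma lastVert_nil (a : V) : lastVert a ([] : List (Link × V)) = a := rfl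

@[simp] lemma lastVert_cons (a : V) (l : Link) (b : V) (s : List (Link × V)) :
    lastVert a ((l, b) :: s) = lastVert b s := by
  show (List.map Prod.snd ((l, b) :: s)).getLastD a = (List.map Prod.snd s).getLastD b
  rw [List.map_cons, List.getLastD_cons]

lemma lastVert_append (a : V) (s t : List (Link × V)) :
    lastVert a (s ++ t) = lastVert (lastVert a s) t := by
  induction s generalizing a with
  | nil => simp
  | cons p s ih => rcases p with ⟨l, b⟩; simp [ih]

@[simp] lemma lastVert_concat (a : V) (s : List (Link × V)) (l : Link) (b : V) :
    lastVert a (s ++ [(l, b)]) = b := by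
  rw [lastVert_append]; rfl

@[simp] lemma pathVerts_nil (a : V) : pathVerts a ([] : List (Link × V)) = [a] := rfl

@[simp] lemma pathVerts_cons (a : V) (l : Link) (b : V) (s : List (Link × V)) :
    pathVerts a ((l, b) :: s) = a :: pathVerts b s := by
  simp [pathVerts]

lemma pathVerts_append (a : V) (s t : List (Link × V)) :
    pathVerts a (s ++ t) = pathVerts a s ++ t.map Prod.snd := by
  simp [pathVerts]

lemma lastVert_mem (a : V) (s : List (Link × V)) : lastVert a s ∈ pathVerts a s := by
  induction s generalizing a with
  | nil => simp
  | cons p s ih => rcases p with ⟨l, b⟩; simp [ih b]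

lemma mem_pathVerts_self (a : V) (s : List (Link × V)) : a ∈ pathVerts a s := by
  simp [pathVerts]

variable {G H : MixedGraph V}

lemma IsWalk.append {a : V} {s t : List (Link × V)} (hs : G.IsWalk a s)
    (ht : G.IsWalk (lastVert a s) t) : G.IsWalk a (s ++ t) := by
  induction hs with
  | nil v => simpa using ht
  | cons hlk _ ih =>
      simp only [lastVert_cons] at ht
      exact IsWalk.cons hlk (ih ht)

lemma IsWalk.of_append_left {a : V} {s t : List (Link × V)} (h : G.IsWalk a (s ++ t)) :
    G.IsWalk a s := by
  induction s generalizing a with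
  | nil => exact IsWalk.nil a
  | cons p s ih =>
      rcases p with ⟨l, b⟩
      cases h with
      | cons hlk htail => exact IsWalk.cons hlk (ih htail)

lemma IsWalk.of_append_right {a : V} {s t : List (Link × V)} (h : G.IsWalk a (s ++ t)) :
    G.IsWalk (lastVert a s) t := by
  induction s generalizing a with
  | nil => simpa using h
  | cons p s ih =>
      rcases p with ⟨l, b⟩
      cases h with
      | cons hlk htail => simpa using ih htail

lemma LinkOk.mono (hsub : H.IsSubgraph G) {a b : V} {l : Link} (h : H.LinkOk a l b) :
    G.LinkOk a l b := by
  cases l with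
  | fwd => exact hsub.2.1 h
  | bwd => exact hsub.2.1 h
  | both => exact hsub.2.2 h

lemma IsWalk.mono (hsub : H.IsSubgraph G) {a : V} {s : List (Link × V)}
    (h : H.IsWalk a s) : G.IsWalk a s := by
  induction h with
  | nil v => exact IsWalk.nil v
  | cons hlk _ ih => exact IsWalk.cons (hlk.mono hsub) ih

/-- The triples `(left vertex, link, right vertex)` of a walk. -/
def triples (a : V) : List (Link × V) → List (V × Link × V)
  | [] => []
  | (l, b) :: rest => (a, l, b) :: triples b rest

@[simp] lemma triples_nil (a : V) : triples a ([] : List (Link × V)) = [] := rfl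
@[simp] lemma triples_cons (a : V) (l : Link) (b : V) (s : List (Link × V)) :
    triples a ((l, b) :: s) = (a, l, b) :: triples b s := rfl

lemma IsWalk.linkOk_of_mem_triples {a : V} {s : List (Link × V)} (h : G.IsWalk a s)
    {p q : V} {l : Link} (hm : (p, l, q) ∈ triples a s) : G.LinkOk p l q := by
  induction h with
  | nil v => simp at hm
  | cons hlk _ ih =>
      rcases List.mem_cons.1 hm with hm | hm
      · obtain ⟨rfl, rfl, rfl⟩ : _ ∧ _ ∧ _ := by
          have h1 := Prod.mk.inj hm
          have h2 := Prod.mk.inj h1.2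
          exact ⟨h1.1, h2.1, h2.2⟩
        exact hlk
      · exact ih hm

lemma mem_triples_mem {a : V} {s : List (Link × V)} {p q : V} {l : Link}
    (hm : (p, l, q) ∈ triples a s) : p ∈ pathVerts a s ∧ q ∈ pathVerts a s := by
  induction s generalizing a with
  | nil => simp at hm
  | cons st s ih =>
      rcases st with ⟨l', b⟩
      rcases List.mem_cons.1 hm with hm | hm
      · obtain ⟨rfl, rfl, rfl⟩ : _ ∧ _ ∧ _ := by
          have h1 := Prod.mk.inj hm
          have h2 := Prod.mk.inj h1.2
          exact ⟨h1.1, h2.1, h2.2⟩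
        exact ⟨by simp, by simp [mem_pathVerts_self]⟩
      · have := ih hm
        exact ⟨by simp [this.1], by simp [this.2]⟩

lemma mem_pairs_steps_triples {a : V} {s : List (Link × V)} {l l' : Link} {u w : V}
    (hm : ((l, u), (l', w)) ∈ pairs s) :
    (∃ p, (p, l, u) ∈ triples a s) ∧ (u, l', w) ∈ triples a s := by
  induction s generalizing a with
  | nil => simp [pairs] at hm
  | cons st s ih =>
      rcases st with ⟨l₀, b⟩
      rcases s with _ | ⟨⟨l₁, c⟩, s⟩
      · simp [pairs] at hm
      · rcases List.mem_cons.1 hm with hm | hm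
        · obtain ⟨h1, h2⟩ := Prod.mk.inj hm
          obtain ⟨rfl, rfl⟩ := Prod.mk.inj h1
          obtain ⟨rfl, rfl⟩ := Prod.mk.inj h2
          exact ⟨⟨a, by simp⟩, by simp⟩
        · obtain ⟨⟨p, hp⟩, hq⟩ := ih (a := b) hm
          exact ⟨⟨p, List.mem_cons_of_mem _ hp⟩, List.mem_cons_of_mem _ hq⟩

lemma mem_snd_triples {a : V} {s : List (Link × V)} {r : V}
    (hm : r ∈ s.map Prod.snd) :
    ∃ l p, (p, l, r) ∈ triples a s ∧
      (r = lastVert a s ∨ ∃ l' w, ((l, r), (l', w)) ∈ pairs s) := by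
  induction s generalizing a with
  | nil => simp at hm
  | cons st s ih =>
      rcases st with ⟨l₀, b⟩
      rcases (by simpa using hm : r = b ∨ ∃ l₂, (l₂, r) ∈ s) with rfl | ⟨l₂, hm2⟩
      · rcases s with _ | ⟨⟨l₁, c⟩, s⟩
        · exact ⟨l₀, a, by simp, Or.inl (by simp)⟩
        · exact ⟨l₀, a, by simp, Or.inr ⟨l₁, c, by simp⟩⟩
      · have hm' : r ∈ s.map Prod.snd := List.mem_map.2 ⟨(l₂, r), hm2, rfl⟩
        obtain ⟨l, p, hp, hrest⟩ := ih (a := b) hm'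
        refine ⟨l, p, List.mem_cons_of_mem _ hp, ?_⟩
        rcases hrest with h | ⟨l', w, hw⟩
        · rcases s with _ | ⟨⟨l₁, c⟩, s⟩
          · simp at hm2
          · exact Or.inl (by simpa using h)
        · refine Or.inr ⟨l', w, ?_⟩
          rcases s with _ | ⟨⟨l₁, c⟩, s⟩
          · simp [pairs] at hw
          · exact List.mem_cons_of_mem _ hw

lemma conn_of_walk {a : V} {s : List (Link × V)}
    (h : ∀ tr ∈ triples a s, H.Adj tr.1 tr.2.2) :
    ∀ p ∈ pathVerts a s, Relation.ReflTransGen H.Adj a p := by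
  induction s generalizing a with
  | nil => intro p hp; rcases (by simpa using hp : p = a) with rfl; exact .refl
  | cons st s ih =>
      rcases st with ⟨l, b⟩
      intro p hp
      rcases List.mem_cons.1 (by simpa using hp) with rfl | hp
      · exact .refl
      · have hab : H.Adj a b := h (a, l, b) (by simp)
        have := ih (a := b) (fun tr htr => h tr (by simp [htr])) p hp
        exact Relation.ReflTransGen.head hab this

lemma mem_pathVerts_split {u a : V} {s : List (Link × V)} (h : u ∈ pathVerts a s) :
    ∃ s₁ s₂, s = s₁ ++ s₂ ∧ lastVert a s₁ = u := by
  induction s generalizing a with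
  | nil => exact ⟨[], [], rfl, by simpa using (by simpa using h : u = a).symm⟩
  | cons st s ih =>
      rcases st with ⟨l, b⟩
      rcases List.mem_cons.1 (by simpa using h) with rfl | h
      · exact ⟨[], (l, b) :: s, rfl, rfl⟩
      · obtain ⟨s₁, s₂, rfl, hlast⟩ := ih (a := b) h
        exact ⟨(l, b) :: s₁, s₂, rfl, by simpa using hlast⟩

end MixedGraph
namespace MGAux

variable {α : Type*}

lemma exists_first_split {S : α → Prop} :
    ∀ {l : List α}, (∃ x ∈ l, S x) → ∃ l₁ u l₂, l = l₁ ++ u :: l₂ ∧ S u ∧ ∀ w ∈ l₁, ¬S w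
  | [], h => by simp at h
  | a :: rest, h => by
      by_cases ha : S a
      · exact ⟨[], a, rest, rfl, ha, by simp⟩
      · obtain ⟨x, hx, hSx⟩ := h
        rcases List.mem_cons.1 hx with rfl | hx
        · exact absurd hSx ha
        · obtain ⟨l₁, u, l₂, rfl, hu, hl₁⟩ := exists_first_split ⟨x, hx, hSx⟩
          refine ⟨a :: l₁, u, l₂, rfl, hu, ?_⟩
          intro w hw
          rcases List.mem_cons.1 hw with rfl | hw
          · exact ha
          · exact hl₁ w hw

lemma exists_last_split {S : α → Prop} :
    ∀ {l : List α}, (∃ x ∈ l, S x) → ∃ l₁ u l₂, l = l₁ ++ u :: l₂ ∧ S u ∧ ∀ w ∈ l₂, ¬S w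
  | [], h => by simp at h
  | a :: rest, h => by
      by_cases hrest : ∃ x ∈ rest, S x
      · obtain ⟨l₁, u, l₂, rfl, hu, hl₂⟩ := exists_last_split hrest
        exact ⟨a :: l₁, u, l₂, rfl, hu, hl₂⟩
      · obtain ⟨x, hx, hSx⟩ := h
        rcases List.mem_cons.1 hx with rfl | hx
        · exact ⟨[], x, rest, rfl, hSx, fun w hw hSw => hrest ⟨w, hw, hSw⟩⟩
        · exact absurd ⟨x, hx, hSx⟩ hrest

end MGAux

namespace MixedGraph

open MGAux

variable {V : Type*} {G H : MixedGraph V}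

lemma Adj.symm {a b : V} (h : H.Adj a b) : H.Adj b a := by
  rcases h with h | h | h
  · exact Or.inr (Or.inl h)
  · exact Or.inl h
  · exact Or.inr (Or.inr (H.bi_symm h))

lemma conn_symm {a b : V} (h : Relation.ReflTransGen H.Adj a b) :
    Relation.ReflTransGen H.Adj b a :=
  by haveI : Std.Symm H.Adj := ⟨fun _ _ => Adj.symm⟩; exact Std.Symm.symm _ _ h

lemma Adj.mono (hsub : H.IsSubgraph G) {a b : V} (h : H.Adj a b) : G.Adj a b := by
  rcases h with h | h | h
  · exact Or.inl (hsub.2.1 h)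
  · exact Or.inr (Or.inl (hsub.2.1 h))
  · exact Or.inr (Or.inr (hsub.2.2 h))

lemma conn_mono (hsub : H.IsSubgraph G) {a b : V} (h : Relation.ReflTransGen H.Adj a b) :
    Relation.ReflTransGen G.Adj a b :=
  Relation.ReflTransGen.mono (r := H.Adj) (p := G.Adj) (fun _ _ hx => hx.mono hsub) _ _ h

lemma Anc.mono (hsub : H.IsSubgraph G) {a b : V} (h : H.Anc a b) : G.Anc a b :=
  Relation.ReflTransGen.mono (r := H.dir) (p := G.dir) (fun _ _ hx => hsub.2.1 hx) _ _ h

lemma IsSubgraph.trans {F : MixedGraph V} (h1 : F.IsSubgraph H) (h2 : H.IsSubgraph G) :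
    F.IsSubgraph G :=
  ⟨h1.1.trans h2.1, fun _ _ hd => h2.2.1 (h1.2.1 hd), fun _ _ hb => h2.2.2 (h1.2.2 hb)⟩

lemma IsADMG.of_subgraph (hG : G.IsADMG) (hsub : H.IsSubgraph G) : H.IsADMG := by
  refine ⟨fun a b hd hanc => hG.1 (hsub.2.1 hd) (hanc.mono hsub), ?_, ?_⟩
  · exact fun v hd => hG.2.1 v (hsub.2.1 hd)
  · exact fun v hb => hG.2.2 v (hsub.2.2 hb)

lemma Acyclic.transGen_irrefl (hG : G.Acyclic) (v : V) : ¬ Relation.TransGen G.dir v v := by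
  intro h
  obtain ⟨w, hvw, hwv⟩ := Relation.TransGen.head'_iff.1 h
  exact hG hvw hwv

/-- Every vertex of a finite acyclic mixed graph has a descendant that is a root. -/
lemma exists_root_descendant [Finite V] (hG : G.Acyclic) :
    ∀ v ∈ G.verts, ∃ r, G.Anc v r ∧ G.IsRoot r := by
  have hwf : WellFounded (fun a b : V => Relation.TransGen G.dir b a) := by
    haveI : IsTrans V (fun a b : V => Relation.TransGen G.dir b a) :=
      ⟨fun a b c hab hbc => Relation.TransGen.trans hbc hab⟩
    haveI : IsIrrefl V (fun a b : V => Relation.TransGen G.dir b a) :=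
      ⟨fun a => hG.transGen_irrefl a⟩
    exact Finite.wellFounded_of_trans_of_irrefl _
  intro v hv
  induction v using hwf.induction with
  | _ v ih =>
    by_cases hout : ∀ w, ¬ G.dir v w
    · exact ⟨v, Relation.ReflTransGen.refl, hv, hout⟩
    · push_neg at hout
      obtain ⟨w, hw⟩ := hout
      obtain ⟨r, hr, hroot⟩ := ih w (Relation.TransGen.single hw) (G.dir_mem hw).2
      exact ⟨r, Relation.ReflTransGen.head hw hr, hroot⟩

lemma rtg_list {r : V → V → Prop} {v w : V} (h : Relation.ReflTransGen r v w) :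
    ∃ D : List V, List.Chain r v D ∧ D.getLastD v = w := by
  induction h using Relation.ReflTransGen.head_induction_on with
  | refl => exact ⟨[], List.Chain.nil, rfl⟩
  | head hac _ ih =>
      obtain ⟨D, hD, hlast⟩ := ih
      exact ⟨_ :: D, List.chain_cons.2 ⟨hac, hD⟩, by rw [List.getLastD_cons]; exact hlast⟩

lemma chain_transGen {r : V → V → Prop} {v : V} {D : List V} (h : List.Chain r v D) :
    ∀ u ∈ D, Relation.TransGen r v u := by
  induction D generalizing v with
  | nil => simp
  | cons d D ih =>
      rcases List.chain_cons.1 h with ⟨hvd, hD⟩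
      intro u hu
      rcases List.mem_cons.1 hu with rfl | hu
      · exact Relation.TransGen.single hvd
      · exact Relation.TransGen.head hvd (ih hD u hu)

lemma chain_nodup (hG : G.Acyclic) {v : V} {D : List V} (h : List.Chain G.dir v D) :
    (v :: D).Nodup := by
  induction D generalizing v with
  | nil => simp
  | cons d D ih =>
      rcases List.chain_cons.1 h with ⟨hvd, hD⟩
      refine List.nodup_cons.2 ⟨?_, ih hD⟩
      intro hv
      have : Relation.TransGen G.dir v v := by
        rcases List.mem_cons.1 hv with rfl | hv
        · exact Relation.TransGen.single hvd
        · exact (Relation.TransGen.single hvd).trans (chain_transGen hD v hv)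
      exact hG.transGen_irrefl v this

lemma chain_walk_of {R : V → V → Prop} (lk : Link)
    (hR : ∀ p q, R p q → G.LinkOk p lk q) {v : V} {D : List V} (h : List.Chain R v D) :
    G.IsWalk v (D.map fun d => (lk, d)) := by
  induction D generalizing v with
  | nil => exact IsWalk.nil v
  | cons d D ih =>
      rcases List.chain_cons.1 h with ⟨hvd, hD⟩
      exact IsWalk.cons (hR _ _ hvd) (ih hD)

@[simp] lemma lastVert_map_link (lk : Link) (v : V) (D : List V) :
    lastVert v (D.map fun d => (lk, d)) = D.getLastD v := by
  simp [lastVert, List.map_map, Function.comp]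

@[simp] lemma pathVerts_map_link (lk : Link) (v : V) (D : List V) :
    pathVerts v (D.map fun d => (lk, d)) = v :: D := by
  simp [pathVerts, List.map_map, Function.comp]

/-- From a walk extract a path with the same endpoints and contained vertices. -/
lemma walkToPath : ∀ n {s : List (Link × V)} {a : V}, s.length ≤ n → G.IsWalk a s →
    ∃ s', G.IsWalk a s' ∧ (pathVerts a s').Nodup ∧ lastVert a s' = lastVert a s ∧
      ∀ u ∈ pathVerts a s', u ∈ pathVerts a s := by
  intro n
  induction n with
  | zero =>
      intro s a hlen _
      rcases List.length_eq_zero_iff.1 (Nat.le_zero.1 hlen) with rfl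
      exact ⟨[], IsWalk.nil a, by simp [pathVerts], rfl, by simp⟩
  | succ n ih =>
      intro s a hlen hw
      by_cases ha : a ∈ s.map Prod.snd
      · obtain ⟨⟨l, a'⟩, hmem, heq⟩ := List.mem_map.1 ha
        rcases (by simpa using heq : a' = a) with rfl
        obtain ⟨s₁, s₂, hs⟩ := List.append_of_mem hmem
        rw [List.append_cons] at hs
        subst hs
        have hw₂ : G.IsWalk a' s₂ := by
          have := hw.of_append_right (s := s₁ ++ [(l, a')]) (t := s₂)
          simpa using this
        have hlen₂ : s₂.length ≤ n := by
          have := hlen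
          simp only [List.length_append, List.length_cons, List.length_singleton] at this
          omega
        obtain ⟨p', hw', hnd', hlast', hsub'⟩ := ih hlen₂ hw₂
        refine ⟨p', hw', hnd', ?_, ?_⟩
        · rw [hlast', lastVert_append, lastVert_concat]
        · intro u hu
          have h2 : u = a' ∨ u ∈ s₂.map Prod.snd := by
            simpa [pathVerts] using hsub' u hu
          rw [pathVerts_append]
          rcases h2 with rfl | hu'
          · exact List.mem_append_left _ (by simp [pathVerts])
          · exact List.mem_append_right _ hu'
      · rcases s with _ | ⟨⟨l, b⟩, rest⟩
        · exact ⟨[], IsWalk.nil a, by simp [pathVerts], rfl, by simp⟩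
        · cases hw with
          | cons hlk htail =>
            obtain ⟨p', hw', hnd', hlast', hsub'⟩ := ih (by simpa using hlen) htail
            refine ⟨(l, b) :: p', IsWalk.cons hlk hw', ?_, by simpa using hlast', ?_⟩
            · rw [pathVerts_cons]
              refine List.nodup_cons.2 ⟨?_, hnd'⟩
              intro hmem
              exact ha (by simpa [pathVerts] using hsub' a hmem)
            · intro u hu
              rw [pathVerts_cons] at hu ⊢
              rcases List.mem_cons.1 hu with rfl | hu
              · exact List.mem_cons_self
              · exact List.mem_cons_of_mem _ (hsub' u hu)

lemma connToWalk {x y : V} (h : Relation.ReflTransGen H.Adj x y) :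
    ∃ s, H.IsWalk x s ∧ lastVert x s = y := by
  induction h with
  | refl => exact ⟨[], IsWalk.nil x, rfl⟩
  | tail _ hbc ih =>
      obtain ⟨s, hw, hlast⟩ := ih
      rcases hbc with hd | hd | hd
      · exact ⟨s ++ [(.fwd, _)], hw.append (by rw [hlast]; exact IsWalk.cons hd (IsWalk.nil _)),
          by simp⟩
      · exact ⟨s ++ [(.bwd, _)], hw.append (by rw [hlast]; exact IsWalk.cons hd (IsWalk.nil _)),
          by simp⟩
      · exact ⟨s ++ [(.both, _)], hw.append (by rw [hlast]; exact IsWalk.cons hd (IsWalk.nil _)),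
          by simp⟩

end MixedGraph
namespace MGAux

variable {α : Type*}

lemma pairs_mem_dropLast : ∀ {L : List α} {p q : α}, (p, q) ∈ pairs L → p ∈ L.dropLast
  | [], p, q, h => by simp [pairs] at h
  | [a], p, q, h => by simp [pairs] at h
  | a :: b :: rest, p, q, h => by
      rcases List.mem_cons.1 h with h | h
      · obtain ⟨rfl, rfl⟩ := Prod.mk.inj h
        rw [List.dropLast_cons₂]
        exact List.mem_cons_self
      · rw [List.dropLast_cons₂]
        exact List.mem_cons_of_mem _ (pairs_mem_dropLast h)

lemma mem_pairs_or_lastD {u : α} : ∀ {D : List α} {c : α}, u ∈ c :: D →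
    (∃ w, (u, w) ∈ pairs (c :: D)) ∨ u = D.getLastD c
  | [], c, h => by
      rcases List.mem_cons.1 h with rfl | h
      · exact Or.inr rfl
      · simp at h
  | d :: Dt, c, h => by
      rcases List.mem_cons.1 h with rfl | h
      · exact Or.inl ⟨d, List.mem_cons_self⟩
      · rcases mem_pairs_or_lastD h with ⟨w, hw⟩ | h
        · exact Or.inl ⟨w, List.mem_cons_of_mem _ hw⟩
        · rw [List.getLastD_cons]
          exact Or.inr h

end MGAux

namespace MixedGraph

open MGAux

variable {V : Type*} {G H : MixedGraph V}

lemma chain_pairs {r : α → α → Prop} :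
    ∀ {c : α} {D : List α}, List.Chain r c D → ∀ {p q : α}, (p, q) ∈ pairs (c :: D) → r p q := by
  intro c D h
  induction D generalizing c with
  | nil => intro p q hpq; simp [pairs] at hpq
  | cons d Dt ih =>
      rcases List.chain_cons.1 h with ⟨hcd, hD⟩
      intro p q hpq
      rcases List.mem_cons.1 hpq with h' | h'
      · obtain ⟨rfl, rfl⟩ := Prod.mk.inj h'
        exact hcd
      · exact ih hD h'

lemma chain_mem_verts {c : V} {D : List V} (h : List.Chain G.dir c D) :
    ∀ u ∈ D, u ∈ G.verts := by
  induction D generalizing c with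
  | nil => simp
  | cons d Dt ih =>
      rcases List.chain_cons.1 h with ⟨hcd, hD⟩
      intro u hu
      rcases List.mem_cons.1 hu with rfl | hu
      · exact (G.dir_mem hcd).2
      · exact ih hD u hu

lemma pathVerts_subset_verts {a : V} {s : List (Link × V)} (hw : G.IsWalk a s)
    (ha : a ∈ G.verts) : ∀ u ∈ pathVerts a s, u ∈ G.verts := by
  induction hw with
  | nil v => intro u hu; rcases (by simpa using hu : u = v) with rfl; exact ha
  | @cons a b l rest hlk _ ih =>
      intro u hu
      have hb : b ∈ G.verts := by
        cases l with
        | fwd => exact (G.dir_mem hlk).2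
        | bwd => exact (G.dir_mem hlk).1
        | both => exact (G.bi_mem hlk).2
      rcases List.mem_cons.1 (by simpa using hu) with rfl | hu
      · exact ha
      · exact ih hb u hu

/-- Truncated descending path: from an ancestor of `Z`, a directed path whose
last vertex is in `Z` and all other vertices avoid `Z`. -/
lemma trunc_descend {Z : Set V} {v : V} (h : v ∈ G.AncSet Z) :
    ∃ D : List V, List.Chain G.dir v D ∧ D.getLastD v ∈ Z ∧
      ∀ u ∈ (v :: D).dropLast, u ∉ Z := by
  obtain ⟨z, hz, hrtg⟩ := h
  induction hrtg using Relation.ReflTransGen.head_induction_on with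
  | refl => exact ⟨[], List.Chain.nil, hz, by simp⟩
  | @head a c hac _ ih =>
      by_cases ha : a ∈ Z
      · exact ⟨[], List.Chain.nil, ha, by simp⟩
      · obtain ⟨D, hD, hlast, hdrop⟩ := ih
        refine ⟨c :: D, List.chain_cons.2 ⟨hac, hD⟩, by rwa [List.getLastD_cons], ?_⟩
        intro u hu
        rcases List.mem_cons.1 (by
          rwa [List.dropLast_cons₂] at hu) with rfl | hu
        · exact ha
        · exact hdrop u hu

lemma act_collider {Z : Set V} {l l' : Link} {v : V}
    (h : G.ActiveTriple Z l v l') (h1 : l.headRight = true) (h2 : l'.headLeft = true) :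
    v ∈ G.AncSet Z := by
  rwa [ActiveTriple, if_pos (by rw [h1, h2]; rfl)] at h

lemma act_noncollider {Z : Set V} {l l' : Link} {v : V}
    (h : G.ActiveTriple Z l v l') (hn : ¬(l.headRight = true ∧ l'.headLeft = true)) :
    v ∉ Z := by
  rw [ActiveTriple] at h
  by_cases hc : (l.headRight && l'.headLeft) = true
  · simp only [Bool.and_eq_true] at hc
    exact absurd hc hn
  · rwa [if_neg hc] at h

lemma notZ_left {Z : Set V} {a : V} {steps : List (Link × V)}
    (hact : List.Chain' (fun s t => G.ActiveTriple Z s.1 s.2 t.1) steps)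
    (ha : ∀ l q rest', steps = (l, q) :: rest' → l.headLeft = false → a ∉ Z) :
    ∀ {p : V} {l : Link} {q : V}, (p, l, q) ∈ triples a steps → l.headLeft = false → p ∉ Z := by
  induction steps generalizing a with
  | nil => intro p l q h; simp at h
  | cons st rest ih =>
      rcases st with ⟨l₁, v₁⟩
      intro p l q hm hl
      rcases (by simpa using hm :
          (p = a ∧ l = l₁ ∧ q = v₁) ∨ (p, l, q) ∈ triples v₁ rest) with ⟨rfl, rfl, rfl⟩ | h
      · exact ha l q rest rfl hl
      · refine ih (List.IsChain.tail hact) ?_ h hl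
        intro l₂ q₂ rest₂ hrest hl₂
        subst hrest
        have := List.isChain_cons_cons.1 hact |>.1
        exact act_noncollider this (by
          rintro ⟨_, h2⟩
          rw [hl₂] at h2
          exact Bool.false_ne_true h2)

lemma notZ_right {Z : Set V} {a : V} {steps : List (Link × V)}
    (hact : List.Chain' (fun s t => G.ActiveTriple Z s.1 s.2 t.1) steps)
    (hlast : lastVert a steps ∉ Z) :
    ∀ {p : V} {l : Link} {q : V}, (p, l, q) ∈ triples a steps → l.headRight = false → q ∉ Z := by
  induction steps generalizing a with
  | nil => intro p l q h; simp at h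
  | cons st rest ih =>
      rcases st with ⟨l₁, v₁⟩
      intro p l q hm hl
      rcases (by simpa using hm :
          (p = a ∧ l = l₁ ∧ q = v₁) ∨ (p, l, q) ∈ triples v₁ rest) with ⟨rfl, rfl, rfl⟩ | h
      · rcases rest with _ | ⟨⟨l₂, v₂⟩, rest⟩
        · simpa using hlast
        · have := List.isChain_cons_cons.1 hact |>.1
          exact act_noncollider this (by
            rintro ⟨h1, _⟩
            rw [hl] at h1
            exact Bool.false_ne_true h1)
      · exact ih (List.IsChain.tail hact) (by simpa using hlast) h hl

end MixedGraph
namespace MixedGraph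

open MGAux

variable {V : Type*} {G : MixedGraph V}

lemma link_eq_bwd {l : Link} (h : l.headRight = false) : l = Link.bwd := by
  cases l
  · exact absurd h (by simp [Link.headRight])
  · rfl
  · exact absurd h (by simp [Link.headRight])

lemma link_eq_fwd {l : Link} (h : l.headLeft = false) : l = Link.fwd := by
  cases l
  · rfl
  · exact absurd h (by simp [Link.headLeft])
  · exact absurd h (by simp [Link.headLeft])

lemma chain_upgrade {α : Type*} {r r' : α → α → Prop} :
    ∀ {c : α} {D : List α}, List.Chain r c D →
      (∀ p q, (p, q) ∈ pairs (c :: D) → r' p q) → List.Chain r' c D := by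
  intro c D h hup
  induction D generalizing c with
  | nil => exact List.Chain.nil
  | cons d Dt ih =>
      rcases List.chain_cons.1 h with ⟨hcd, hD⟩
      exact List.chain_cons.2 ⟨hup _ _ (List.mem_cons_self),
        ih hD (fun p q hpq => hup p q (List.mem_cons_of_mem _ hpq))⟩

/-- The witness graph: the edges of a walk together with descending paths
hanging off the vertices of `Col`. -/
def witness (a : V) (steps : List (Link × V)) (Col : Set V) (D : V → List V) :
    MixedGraph V where
  verts := {u | u ∈ pathVerts a steps ∨ ∃ c, c ∈ Col ∧ u ∈ c :: D c}
  dir p q := (p, Link.fwd, q) ∈ triples a steps ∨ (q, Link.bwd, p) ∈ triples a steps ∨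
    ∃ c, c ∈ Col ∧ (p, q) ∈ pairs (c :: D c)
  bi p q := (p, Link.both, q) ∈ triples a steps ∨ (q, Link.both, p) ∈ triples a steps
  dir_mem := by
    rintro p q (h | h | ⟨c, hc, h⟩)
    · exact ⟨Or.inl (mem_triples_mem h).1, Or.inl (mem_triples_mem h).2⟩
    · exact ⟨Or.inl (mem_triples_mem h).2, Or.inl (mem_triples_mem h).1⟩
    · exact ⟨Or.inr ⟨c, hc, (mem_pairs_mem h).1⟩, Or.inr ⟨c, hc, (mem_pairs_mem h).2⟩⟩
  bi_mem := by
    rintro p q (h | h)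
    · exact ⟨Or.inl (mem_triples_mem h).1, Or.inl (mem_triples_mem h).2⟩
    · exact ⟨Or.inl (mem_triples_mem h).2, Or.inl (mem_triples_mem h).1⟩
  bi_symm := by
    rintro p q (h | h)
    · exact Or.inr h
    · exact Or.inl h

lemma exists_witness [Fintype V] {X Y Z : Set V} (hXV : X ⊆ G.verts)
    (h : G.DConnected X Y Z) :
    ∃ W : MixedGraph V, W.IsSubgraph G ∧ W.Connected ∧ (W.verts ∩ X).Nonempty ∧
      (W.verts ∩ Y).Nonempty ∧ W.roots ⊆ X ∪ Y ∪ Z ∧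
      ∀ v ∈ W.verts, v ∈ Z → ∀ w, ¬ W.dir v w := by
  obtain ⟨a, steps, ⟨hwalk, hnd⟩, haX, hlastY, haZ, hlastZ, hact⟩ := h
  set Col : Set V := {u | ∃ l l' w, ((l, u), (l', w)) ∈ pairs steps ∧
    l.headRight = true ∧ l'.headLeft = true} with hColdef
  have hColAnc : ∀ u ∈ Col, u ∈ G.AncSet Z := by
    rintro u ⟨l, l', w, hmem, h1, h2⟩
    exact act_collider (chain'_iff_pairs.1 hact _ hmem) h1 h2
  have hColPath : ∀ u ∈ Col, u ∈ pathVerts a steps := by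
    rintro u ⟨l, l', w, hmem, h1, h2⟩
    exact (mem_triples_mem (mem_pairs_steps_triples (a := a) hmem).2).1
  have hDex : ∀ u : V, ∃ Du : List V, u ∈ Col →
      List.Chain G.dir u Du ∧ Du.getLastD u ∈ Z ∧ ∀ w ∈ (u :: Du).dropLast, w ∉ Z := by
    intro u
    by_cases hu : u ∈ Col
    · obtain ⟨Du, h1, h2, h3⟩ := trunc_descend (hColAnc u hu)
      exact ⟨Du, fun _ => ⟨h1, h2, h3⟩⟩
    · exact ⟨[], fun hc => absurd hc hu⟩
  choose D hD using hDex
  set W : MixedGraph V := witness a steps Col D with hWdef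
  have hWdir : ∀ p q : V, W.dir p q ↔ ((p, Link.fwd, q) ∈ triples a steps ∨
      (q, Link.bwd, p) ∈ triples a steps ∨ ∃ c, c ∈ Col ∧ (p, q) ∈ pairs (c :: D c)) :=
    fun p q => Iff.rfl
  have hWverts : ∀ u : V, u ∈ W.verts ↔ (u ∈ pathVerts a steps ∨
      ∃ c, c ∈ Col ∧ u ∈ c :: D c) := fun u => Iff.rfl
  -- subgraph
  have hsub : W.IsSubgraph G := by
    refine ⟨?_, ?_, ?_⟩
    · rintro u (hu | ⟨c, hc, hu⟩)
      · exact pathVerts_subset_verts hwalk (hXV haX) u hu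
      · rcases List.mem_cons.1 hu with rfl | hu
        · exact pathVerts_subset_verts hwalk (hXV haX) u (hColPath u hc)
        · exact chain_mem_verts (hD c hc).1 u hu
    · rintro p q (h | h | ⟨c, hc, h⟩)
      · exact hwalk.linkOk_of_mem_triples h
      · exact hwalk.linkOk_of_mem_triples h
      · exact chain_pairs (hD c hc).1 h
    · rintro p q (h | h)
      · exact hwalk.linkOk_of_mem_triples h
      · exact G.bi_symm (hwalk.linkOk_of_mem_triples h)
  -- connectivity hub
  have hadjtr : ∀ tr ∈ triples a steps, W.Adj tr.1 tr.2.2 := by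
    rintro ⟨p, l, q⟩ htr
    cases l with
    | fwd => exact Or.inl (Or.inl htr)
    | bwd => exact Or.inr (Or.inl (Or.inr (Or.inl htr)))
    | both => exact Or.inr (Or.inr (Or.inl htr))
  have hhub : ∀ u ∈ W.verts, Relation.ReflTransGen W.Adj a u := by
    rintro u (hu | ⟨c, hc, hu⟩)
    · exact conn_of_walk hadjtr u hu
    · have hac : Relation.ReflTransGen W.Adj a c := conn_of_walk hadjtr c (hColPath c hc)
      have hch : List.Chain W.dir c (D c) :=
        chain_upgrade (hD c hc).1 (fun p q hpq => Or.inr (Or.inr ⟨c, hc, hpq⟩))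
      have hchAdj : List.Chain W.Adj c (D c) := List.IsChain.imp (fun p q hd => Or.inl hd) hch
      rcases List.mem_cons.1 hu with rfl | hu
      · exact hac
      · exact hac.trans (chain_transGen hchAdj u hu).to_reflTransGen
  refine ⟨W, hsub, ⟨⟨a, Or.inl (mem_pathVerts_self a steps)⟩,
      fun p hp q hq => (conn_symm (hhub p hp)).trans (hhub q hq)⟩,
    ⟨a, Or.inl (mem_pathVerts_self a steps), haX⟩,
    ⟨lastVert a steps, Or.inl (lastVert_mem a steps), hlastY⟩, ?_, ?_⟩
  · -- roots
    rintro r ⟨hrv, hroot⟩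
    show r ∈ X ∪ Y ∪ Z
    rcases hrv with hr | ⟨c, hc, hr⟩
    · rcases List.mem_cons.1 hr with rfl | hr
      · exact Or.inl (Or.inl haX)
      · obtain ⟨l, p, htrip, hrest⟩ := mem_snd_triples (a := a) hr
        rcases hrest with rfl | ⟨l', w, hpair⟩
        · exact Or.inl (Or.inr hlastY)
        · rcases hlr : l.headRight with _ | _
          · -- l = bwd, r has an outgoing edge to p
            rw [link_eq_bwd hlr] at htrip
            exact absurd (Or.inr (Or.inl htrip)) (hroot p)
          · rcases hll : l'.headLeft with _ | _
            · have htrip' := (mem_pairs_steps_triples (a := a) hpair).2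
              rw [link_eq_fwd hll] at htrip'
              exact absurd (Or.inl htrip') (hroot w)
            · have hcol : r ∈ Col := ⟨l, l', w, hpair, hlr, hll⟩
              by_cases hrZ : r ∈ Z
              · exact Or.inr hrZ
              · rcases hDr : D r with _ | ⟨d, Dt⟩
                · have := (hD r hcol).2.1
                  rw [hDr] at this
                  exact absurd this hrZ
                · refine absurd (Or.inr (Or.inr ⟨r, hcol, ?_⟩)) (hroot d)
                  rw [hDr]
                  exact List.mem_cons_self
    · rcases mem_pairs_or_lastD hr with ⟨w, hw⟩ | hlast
      · exact absurd (Or.inr (Or.inr ⟨c, hc, hw⟩)) (hroot w)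
      · subst hlast
        exact Or.inr (hD c hc).2.1
  · -- Z vertices have no outgoing edge
    rintro v _ hvZ w (htrip | htrip | ⟨c, hc, hpair⟩)
    · exact notZ_left hact (fun _ _ _ _ _ => haZ) htrip rfl hvZ
    · exact notZ_right hact hlastZ htrip rfl hvZ
    · exact (hD c hc).2.2 v (pairs_mem_dropLast hpair) hvZ

end MixedGraph
namespace MixedGraph

open MGAux

variable {V : Type*} {G H : MixedGraph V}

/-- Restriction of a mixed graph to a vertex set. -/
def restrict (H : MixedGraph V) (T : Set V) : MixedGraph V where
  verts := H.verts ∩ T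
  dir a b := H.dir a b ∧ a ∈ T ∧ b ∈ T
  bi a b := H.bi a b ∧ a ∈ T ∧ b ∈ T
  dir_mem := fun _ _ h => ⟨⟨(H.dir_mem h.1).1, h.2.1⟩, (H.dir_mem h.1).2, h.2.2⟩
  bi_mem := fun _ _ h => ⟨⟨(H.bi_mem h.1).1, h.2.1⟩, (H.bi_mem h.1).2, h.2.2⟩
  bi_symm := fun _ _ h => ⟨H.bi_symm h.1, h.2.2, h.2.1⟩

lemma restrict_subgraph (H : MixedGraph V) (T : Set V) : (H.restrict T).IsSubgraph H :=
  ⟨Set.inter_subset_left, fun _ _ h => h.1, fun _ _ h => h.1⟩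

lemma deleteDir_subgraph (H : MixedGraph V) (s t : V) : (H.deleteDir s t).IsSubgraph H :=
  ⟨subset_rfl, fun _ _ h => h.1, fun _ _ h => h⟩

lemma adj_restrict {T : Set V} {a b : V} (h : H.Adj a b) (ha : a ∈ T) (hb : b ∈ T) :
    (H.restrict T).Adj a b := by
  rcases h with h | h | h
  · exact Or.inl ⟨h, ha, hb⟩
  · exact Or.inr (Or.inl ⟨h, hb, ha⟩)
  · exact Or.inr (Or.inr ⟨h, ha, hb⟩)

lemma conn_restrict {T : Set V} (hT : ∀ a b, a ∈ T → H.Adj a b → b ∈ T) {p q : V}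
    (hp : p ∈ T) (h : Relation.ReflTransGen H.Adj p q) :
    Relation.ReflTransGen (H.restrict T).Adj p q := by
  revert hp
  induction h using Relation.ReflTransGen.head_induction_on with
  | refl => exact fun _ => .refl
  | @head a c hac hcq ih =>
      intro haT
      have hcT := hT _ _ haT hac
      exact Relation.ReflTransGen.head (adj_restrict hac haT hcT) (ih hcT)

/-- Bridge lemma: connectivity after deleting a directed edge. -/
lemma conn_delete_cases {s t : V} {p q : V} (h : Relation.ReflTransGen H.Adj p q) :
    Relation.ReflTransGen (H.deleteDir s t).Adj p q ∨
      (Relation.ReflTransGen (H.deleteDir s t).Adj p s ∧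
       Relation.ReflTransGen (H.deleteDir s t).Adj t q) ∨
      (Relation.ReflTransGen (H.deleteDir s t).Adj p t ∧
       Relation.ReflTransGen (H.deleteDir s t).Adj s q) := by
  set δ := H.deleteDir s t with hδ
  induction h using Relation.ReflTransGen.head_induction_on with
  | refl => exact Or.inl .refl
  | @head a c hac hcq ih =>
      by_cases hsurv : δ.Adj a c
      · rcases ih with h0 | ⟨h1, h2⟩ | ⟨h1, h2⟩
        · exact Or.inl (Relation.ReflTransGen.head hsurv h0)
        · exact Or.inr (Or.inl ⟨Relation.ReflTransGen.head hsurv h1, h2⟩)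
        · exact Or.inr (Or.inr ⟨Relation.ReflTransGen.head hsurv h1, h2⟩)
      · -- the step must be the deleted edge, in one of the two directions
        have hcase : (a = s ∧ c = t) ∨ (a = t ∧ c = s) := by
          rcases hac with h | h | h
          · by_cases hp' : a = s ∧ c = t
            · exact Or.inl hp'
            · exact absurd (Or.inl ⟨h, hp'⟩) hsurv
          · by_cases hp' : c = s ∧ a = t
            · exact Or.inr ⟨hp'.2, hp'.1⟩
            · exact absurd (Or.inr (Or.inl ⟨h, hp'⟩)) hsurv
          · exact absurd (Or.inr (Or.inr h)) hsurv
        rcases hcase with ⟨rfl, rfl⟩ | ⟨rfl, rfl⟩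
        · rcases ih with h0 | ⟨h1, h2⟩ | ⟨h1, h2⟩
          · exact Or.inr (Or.inl ⟨.refl, h0⟩)
          · exact Or.inr (Or.inl ⟨.refl, h2⟩)
          · exact Or.inl h2
        · rcases ih with h0 | ⟨h1, h2⟩ | ⟨h1, h2⟩
          · exact Or.inr (Or.inr ⟨.refl, h0⟩)
          · exact Or.inl h2
          · exact Or.inr (Or.inr ⟨.refl, h2⟩)

/-- If no connection from `s` to the target, connectivity survives deleting `s → t`. -/
lemma conn_delete_of_avoid {s t w : V} (hns : ¬ Relation.ReflTransGen H.Adj s w) :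
    ∀ {p : V}, Relation.ReflTransGen H.Adj p w →
      Relation.ReflTransGen (H.deleteDir s t).Adj p w := by
  intro p h
  induction h using Relation.ReflTransGen.head_induction_on with
  | refl => exact .refl
  | @head a c hac hcq ih =>
      have has : a ≠ s := by
        rintro rfl
        exact hns (Relation.ReflTransGen.head hac hcq)
      have hsurv : (H.deleteDir s t).Adj a c := by
        rcases hac with h | h | h
        · exact Or.inl ⟨h, fun hc => has hc.1⟩
        · refine Or.inr (Or.inl ⟨h, fun hc => ?_⟩)
          rcases hc with ⟨rfl, rfl⟩
          exact hns hcq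
        · exact Or.inr (Or.inr h)
      exact Relation.ReflTransGen.head hsurv ih

/-- Number of edges of a mixed graph (finite vertex type). -/
noncomputable def ecount (H : MixedGraph V) : ℕ :=
  {p : V × V | H.dir p.1 p.2}.ncard + {p : V × V | H.bi p.1 p.2}.ncard

lemma ecount_lt_of_dir [Fintype V] {H' H : MixedGraph V}
    (hdir : ∀ a b, H'.dir a b → H.dir a b) (hbi : ∀ a b, H'.bi a b → H.bi a b)
    {a b : V} (hab : H.dir a b) (hnab : ¬ H'.dir a b) : ecount H' < ecount H := by
  have h1 : {p : V × V | H'.dir p.1 p.2} ⊂ {p : V × V | H.dir p.1 p.2} :=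
    ⟨fun p hp => hdir p.1 p.2 hp, fun hsub => hnab (hsub (show H.dir (a, b).1 (a, b).2 from hab))⟩
  have h2 : {p : V × V | H'.bi p.1 p.2} ⊆ {p : V × V | H.bi p.1 p.2} := fun p hp => hbi p.1 p.2 hp
  exact Nat.add_lt_add_of_lt_of_le (Set.ncard_lt_ncard h1 (Set.toFinite _))
    (Set.ncard_le_ncard h2 (Set.toFinite _))

lemma ecount_lt_of_bi [Fintype V] {H' H : MixedGraph V}
    (hdir : ∀ a b, H'.dir a b → H.dir a b) (hbi : ∀ a b, H'.bi a b → H.bi a b)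
    {a b : V} (hab : H.bi a b) (hnab : ¬ H'.bi a b) : ecount H' < ecount H := by
  have h1 : {p : V × V | H'.bi p.1 p.2} ⊂ {p : V × V | H.bi p.1 p.2} :=
    ⟨fun p hp => hbi p.1 p.2 hp, fun hsub => hnab (hsub (show H.bi (a, b).1 (a, b).2 from hab))⟩
  have h2 : {p : V × V | H'.dir p.1 p.2} ⊆ {p : V × V | H.dir p.1 p.2} := fun p hp => hdir p.1 p.2 hp
  exact Nat.add_lt_add_of_le_of_lt (Set.ncard_le_ncard h2 (Set.toFinite _))
    (Set.ncard_lt_ncard h1 (Set.toFinite _))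

end MixedGraph
namespace MixedGraph

open MGAux

variable {V : Type*} {G : MixedGraph V}

lemma prune [Fintype V] (hG : G.IsADMG) {X Y Z : Set V} {x y : V} (hx : x ∈ X) (hy : y ∈ Y)
    {W : MixedGraph V} (hWsub : W.IsSubgraph G) (hxW : x ∈ W.verts) (hyW : y ∈ W.verts)
    (hWconn : ∀ p ∈ W.verts, ∀ q ∈ W.verts, Relation.ReflTransGen W.Adj p q)
    (hWroots : W.roots ⊆ X ∪ Y ∪ Z)
    (hWZ : ∀ v ∈ W.verts, v ∈ Z → ∀ w, ¬ W.dir v w) :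
    ∃ σ : MixedGraph V, σ.IsSubgraph G ∧ σ.IsSOI ∧ σ.Connects X Y Z := by
  classical
  set S : MixedGraph V → Prop := fun σ => σ.IsSubgraph G ∧ x ∈ σ.verts ∧ y ∈ σ.verts ∧
    (∀ p ∈ σ.verts, ∀ q ∈ σ.verts, Relation.ReflTransGen σ.Adj p q) ∧
    σ.roots ⊆ X ∪ Y ∪ Z ∧ (∀ v ∈ σ.verts, v ∈ Z → ∀ w, ¬ σ.dir v w) with hSdef
  have hWS : S W := ⟨hWsub, hxW, hyW, hWconn, hWroots, hWZ⟩
  have hex : ∃ n, ∃ τ, S τ ∧ ecount τ = n := ⟨_, W, hWS, rfl⟩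
  obtain ⟨σ, hσS, hσc⟩ := Nat.find_spec hex
  have contraMin : ∀ τ, S τ → ecount τ < ecount σ → False := by
    intro τ hτ hlt
    have := Nat.find_min' hex ⟨τ, hτ, rfl⟩
    omega
  obtain ⟨hsub, hxσ, hyσ, hconn, hroots, hZout⟩ := hσS
  -- the degree condition of structures of interest
  have hdeg : ∀ v ∈ σ.verts,
      (∀ ⦃a b : V⦄, σ.dir v a → σ.dir v b → a = b) ∨
      ((∃ w₁ w₂, w₁ ≠ w₂ ∧ σ.dir v w₁ ∧ σ.dir v w₂ ∧
          ∀ w, σ.dir v w → w = w₁ ∨ w = w₂) ∧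
        (∀ w, ¬ σ.dir w v) ∧ (∀ w, ¬ σ.bi v w)) := by
    intro v hv
    by_contra hcon
    have hA : ¬ ∀ ⦃a b : V⦄, σ.dir v a → σ.dir v b → a = b := fun h => hcon (Or.inl h)
    have hB : ¬ _ := fun h => hcon (Or.inr h)
    push_neg at hA
    obtain ⟨w₁, w₂, hd1, hd2, hne12⟩ := hA
    -- Claim 1: deleting any outgoing edge of v (keeping another) disconnects x from y
    have hem : ∀ w w', σ.dir v w → σ.dir v w' → w' ≠ w →
        ¬ Relation.ReflTransGen (σ.deleteDir v w).Adj x y := by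
      intro w w' hw hw' hne hconxy
      set δ := σ.deleteDir v w with hδdef
      set T : Set V := {u | Relation.ReflTransGen δ.Adj x u} with hTdef
      have hTclosed : ∀ a b, a ∈ T → δ.Adj a b → b ∈ T :=
        fun a b ha hab => Relation.ReflTransGen.tail ha hab
      set σ' := δ.restrict T with hσ'def
      have hS' : S σ' := by
        refine ⟨(restrict_subgraph δ T).trans ((deleteDir_subgraph σ v w).trans hsub),
          ⟨hxσ, Relation.ReflTransGen.refl⟩, ⟨hyσ, hconxy⟩, ?_, ?_, ?_⟩
        · rintro p ⟨hpv, hpT⟩ q ⟨hqv, hqT⟩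
          exact conn_restrict hTclosed hpT ((conn_symm hpT).trans hqT)
        · rintro r ⟨⟨hrσ, hrT⟩, hno⟩
          refine hroots ⟨hrσ, ?_⟩
          intro t ht
          by_cases hrv : r = v
          · subst hrv
            have hδd : δ.dir r w' := ⟨hw', fun hc => hne hc.2⟩
            exact hno w' ⟨hδd, hrT, hTclosed r w' hrT (Or.inl hδd)⟩
          · have hδd : δ.dir r t := ⟨ht, fun hc => hrv hc.1⟩
            exact hno t ⟨hδd, hrT, hTclosed r t hrT (Or.inl hδd)⟩
        · rintro u ⟨huσ, _⟩ huZ t ht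
          exact hZout u huσ huZ t ht.1.1
      exact contraMin σ' hS'
        (ecount_lt_of_dir (fun a b h => h.1.1) (fun a b h => h.1) hw (fun h => h.1.2 ⟨rfl, rfl⟩))
    have hem₁ := hem w₁ w₂ hd1 hd2 (fun h => hne12 h.symm)
    have hem₂ := hem w₂ w₁ hd2 hd1 hne12
    set δ := (σ.deleteDir v w₁).deleteDir v w₂ with hδdef
    have hδ1 : δ.IsSubgraph (σ.deleteDir v w₁) := deleteDir_subgraph _ v w₂
    have hδ2 : δ.IsSubgraph (σ.deleteDir v w₂) :=
      ⟨subset_rfl, fun a b h => ⟨h.1.1, h.2⟩, fun a b h => h⟩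
    have hδσ : δ.IsSubgraph σ := hδ1.trans (deleteDir_subgraph σ v w₁)
    have he₁' : (σ.deleteDir v w₂).Adj v w₁ := Or.inl ⟨hd1, fun hc => hne12 hc.2⟩
    have he₂' : (σ.deleteDir v w₁).Adj v w₂ := Or.inl ⟨hd2, fun hc => hne12 hc.2.symm⟩
    have c1 : ∀ {p q}, Relation.ReflTransGen δ.Adj p q →
        Relation.ReflTransGen (σ.deleteDir v w₁).Adj p q := fun h => conn_mono hδ1 h
    have c2 : ∀ {p q}, Relation.ReflTransGen δ.Adj p q →
        Relation.ReflTransGen (σ.deleteDir v w₂).Adj p q := fun h => conn_mono hδ2 h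
    -- the two-deletion bridge lemma
    have hnear : ∀ p q, Relation.ReflTransGen σ.Adj p q →
        Relation.ReflTransGen δ.Adj p q ∨
        ((Relation.ReflTransGen δ.Adj p v ∨ Relation.ReflTransGen δ.Adj p w₁ ∨
            Relation.ReflTransGen δ.Adj p w₂) ∧
         (Relation.ReflTransGen δ.Adj q v ∨ Relation.ReflTransGen δ.Adj q w₁ ∨
            Relation.ReflTransGen δ.Adj q w₂)) := by
      intro p q h
      have step2 : ∀ {r r'}, Relation.ReflTransGen (σ.deleteDir v w₁).Adj r r' →
          Relation.ReflTransGen δ.Adj r r' ∨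
          (Relation.ReflTransGen δ.Adj r v ∧ Relation.ReflTransGen δ.Adj w₂ r') ∨
          (Relation.ReflTransGen δ.Adj r w₂ ∧ Relation.ReflTransGen δ.Adj v r') :=
        fun h => conn_delete_cases h
      rcases conn_delete_cases (s := v) (t := w₁) h with h0 | ⟨ha, hb⟩ | ⟨ha, hb⟩
      · rcases step2 h0 with g | ⟨g1, g2⟩ | ⟨g1, g2⟩
        · exact Or.inl g
        · exact Or.inr ⟨Or.inl g1, Or.inr (Or.inr (conn_symm g2))⟩
        · exact Or.inr ⟨Or.inr (Or.inr g1), Or.inl (conn_symm g2)⟩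
      · refine Or.inr ⟨?_, ?_⟩
        · rcases step2 ha with g | ⟨g1, g2⟩ | ⟨g1, g2⟩
          · exact Or.inl g
          · exact Or.inl g1
          · exact Or.inr (Or.inr g1)
        · rcases step2 hb with g | ⟨g1, g2⟩ | ⟨g1, g2⟩
          · exact Or.inr (Or.inl (conn_symm g))
          · exact Or.inr (Or.inr (conn_symm g2))
          · exact Or.inl (conn_symm g2)
      · refine Or.inr ⟨?_, ?_⟩
        · rcases step2 ha with g | ⟨g1, g2⟩ | ⟨g1, g2⟩
          · exact Or.inr (Or.inl g)
          · exact Or.inl g1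
          · exact Or.inr (Or.inr g1)
        · rcases step2 hb with g | ⟨g1, g2⟩ | ⟨g1, g2⟩
          · exact Or.inl (conn_symm g)
          · exact Or.inr (Or.inr (conn_symm g2))
          · exact Or.inl (conn_symm g2)
    rcases hnear x y (hconn x hxσ y hyσ) with h0 | ⟨hxn, hyn⟩
    · exact hem₁ (c1 h0)
    have hG1 : (Relation.ReflTransGen δ.Adj x w₁ ∧ Relation.ReflTransGen δ.Adj y w₂) ∨
        (Relation.ReflTransGen δ.Adj x w₂ ∧ Relation.ReflTransGen δ.Adj y w₁) := by
      rcases hxn with hxv | hx1 | hx2 <;> rcases hyn with hyv | hy1 | hy2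
      · exact (hem₁ ((c1 hxv).trans (conn_symm (c1 hyv)))).elim
      · exact (hem₂ (((c2 hxv).tail he₁').trans (c2 (conn_symm hy1)))).elim
      · exact (hem₁ (((c1 hxv).tail he₂').trans (c1 (conn_symm hy2)))).elim
      · exact (hem₂ (((c2 hx1).tail (Adj.symm he₁')).trans (c2 (conn_symm hyv)))).elim
      · exact (hem₁ ((c1 hx1).trans (conn_symm (c1 hy1)))).elim
      · exact Or.inl ⟨hx1, hy2⟩
      · exact (hem₁ (((c1 hx2).tail (Adj.symm he₂')).trans (c1 (conn_symm hyv)))).elim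
      · exact Or.inr ⟨hx2, hy1⟩
      · exact (hem₁ ((c1 hx2).trans (conn_symm (c1 hy2)))).elim
    have hG2 : ¬ Relation.ReflTransGen δ.Adj v w₁ ∧ ¬ Relation.ReflTransGen δ.Adj v w₂ := by
      constructor
      · intro hv1
        rcases hG1 with ⟨hx1, hy2⟩ | ⟨hx2, hy1⟩
        · exact hem₁ ((((c1 hx1).trans (conn_symm (c1 hv1))).tail he₂').trans
            (c1 (conn_symm hy2)))
        · exact hem₁ ((((c1 hx2).tail (Adj.symm he₂')).trans (c1 hv1)).trans
            (c1 (conn_symm hy1)))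
      · intro hv2
        rcases hG1 with ⟨hx1, hy2⟩ | ⟨hx2, hy1⟩
        · exact hem₂ ((((c2 hx1).tail (Adj.symm he₁')).trans (c2 hv2)).trans
            (c2 (conn_symm hy2)))
        · exact hem₂ ((((c2 hx2).trans (conn_symm (c2 hv2))).tail he₁').trans
            (c2 (conn_symm hy1)))
    by_cases hinc : (∃ u, σ.dir u v) ∨ (∃ u, σ.bi v u)
    · -- v has an arrowhead: cut off the component of v beyond the two edges
      set T : Set V := {p | Relation.ReflTransGen δ.Adj p w₁ ∨
        Relation.ReflTransGen δ.Adj p w₂} ∪ {v} with hTdef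
      set σ' := σ.restrict T with hσ'def
      have hvT : v ∈ T := Or.inr rfl
      have hw₁T : w₁ ∈ T := Or.inl (Or.inl Relation.ReflTransGen.refl)
      have hw₂T : w₂ ∈ T := Or.inl (Or.inr Relation.ReflTransGen.refl)
      have he₁σ' : σ'.dir v w₁ := ⟨hd1, hvT, hw₁T⟩
      have he₂σ' : σ'.dir v w₂ := ⟨hd2, hvT, hw₂T⟩
      have hxT : x ∈ T := by
        rcases hG1 with ⟨h, _⟩ | ⟨h, _⟩
        · exact Or.inl (Or.inl h)
        · exact Or.inl (Or.inr h)
      have hyT : y ∈ T := by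
        rcases hG1 with ⟨_, h⟩ | ⟨_, h⟩
        · exact Or.inl (Or.inr h)
        · exact Or.inl (Or.inl h)
      have hlift : ∀ (wi : V), (∀ u, Relation.ReflTransGen δ.Adj u wi → u ∈ T) →
          ∀ p, Relation.ReflTransGen δ.Adj p wi → Relation.ReflTransGen σ'.Adj p wi := by
        intro wi hwi p h
        induction h using Relation.ReflTransGen.head_induction_on with
        | refl => exact .refl
        | @head a c hac hcq ih =>
            exact Relation.ReflTransGen.head
              (adj_restrict (hac.mono hδσ) (hwi a (Relation.ReflTransGen.head hac hcq))
                (hwi c hcq)) ih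
      have hhub : ∀ p ∈ σ'.verts, Relation.ReflTransGen σ'.Adj p v := by
        rintro p ⟨hpσ, hpT⟩
        rcases hpT with hcls | hpv
        · rcases hcls with h1 | h2
          · exact Relation.ReflTransGen.tail
              (hlift w₁ (fun u hu => Or.inl (Or.inl hu)) p h1) (Adj.symm (Or.inl he₁σ'))
          · exact Relation.ReflTransGen.tail
              (hlift w₂ (fun u hu => Or.inl (Or.inr hu)) p h2) (Adj.symm (Or.inl he₂σ'))
        · rw [Set.mem_singleton_iff] at hpv
          subst hpv
          exact .refl
      have hS' : S σ' := by
        refine ⟨(restrict_subgraph σ T).trans hsub, ⟨hxσ, hxT⟩, ⟨hyσ, hyT⟩, ?_, ?_, ?_⟩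
        · intro p hp q hq
          exact (hhub p hp).trans (conn_symm (hhub q hq))
        · rintro r ⟨⟨hrσ, hrT⟩, hno⟩
          refine hroots ⟨hrσ, ?_⟩
          intro t ht
          by_cases hrv : r = v
          · subst hrv
            exact hno w₁ he₁σ'
          · have hcls : Relation.ReflTransGen δ.Adj r w₁ ∨ Relation.ReflTransGen δ.Adj r w₂ := by
              rcases hrT with h | h
              · exact h
              · exact absurd (Set.mem_singleton_iff.1 h) hrv
            have hδrt : δ.dir r t := ⟨⟨ht, fun hc => hrv hc.1⟩, fun hc => hrv hc.1⟩
            have htT : t ∈ T := by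
              rcases hcls with h | h
              · exact Or.inl (Or.inl (Relation.ReflTransGen.head (Adj.symm (Or.inl hδrt)) h))
              · exact Or.inl (Or.inr (Relation.ReflTransGen.head (Adj.symm (Or.inl hδrt)) h))
            exact hno t ⟨ht, hrT, htT⟩
        · rintro u ⟨huσ, _⟩ huZ t ht
          exact hZout u huσ huZ t ht.1
      rcases hinc with ⟨u, hu⟩ | ⟨u, hu⟩
      · have hune : u ≠ v := by
          rintro rfl
          exact hG.2.1 u (hsub.2.1 hu)
        have hadjvu : δ.Adj v u :=
          Or.inr (Or.inl ⟨⟨hu, fun hc => hune hc.1⟩, fun hc => hune hc.1⟩)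
        have huT : u ∉ T := by
          rintro (hcls | hveq)
          · rcases hcls with h | h
            · exact hG2.1 (Relation.ReflTransGen.head hadjvu h)
            · exact hG2.2 (Relation.ReflTransGen.head hadjvu h)
          · exact hune (Set.mem_singleton_iff.1 hveq)
        exact contraMin σ' hS'
          (ecount_lt_of_dir (fun a b h => h.1) (fun a b h => h.1) hu (fun h => huT h.2.1))
      · have hune : u ≠ v := by
          rintro rfl
          exact hG.2.2 u (hsub.2.2 hu)
        have hadjvu : δ.Adj v u := Or.inr (Or.inr hu)
        have huT : u ∉ T := by
          rintro (hcls | hveq)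
          · rcases hcls with h | h
            · exact hG2.1 (Relation.ReflTransGen.head hadjvu h)
            · exact hG2.2 (Relation.ReflTransGen.head hadjvu h)
          · exact hune (Set.mem_singleton_iff.1 hveq)
        exact contraMin σ' hS'
          (ecount_lt_of_bi (fun a b h => h.1) (fun a b h => h.1) hu (fun h => huT h.2.2))
    · -- no arrowhead at v: there must be a third outgoing edge
      have hninc : ∀ u, ¬ σ.dir u v := fun u hu => hinc (Or.inl ⟨u, hu⟩)
      have hnbi : ∀ u, ¬ σ.bi v u := fun u hu => hinc (Or.inr ⟨u, hu⟩)
      have hspec : ¬ ∃ w₁' w₂', w₁' ≠ w₂' ∧ σ.dir v w₁' ∧ σ.dir v w₂' ∧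
          ∀ w, σ.dir v w → w = w₁' ∨ w = w₂' := fun hs => hB ⟨hs, hninc, hnbi⟩
      have hall : ¬ ∀ w, σ.dir v w → w = w₁ ∨ w = w₂ :=
        fun hall => hspec ⟨w₁, w₂, hne12, hd1, hd2, hall⟩
      obtain ⟨w₃, hd3, hw31, hw32⟩ : ∃ w, σ.dir v w ∧ w ≠ w₁ ∧ w ≠ w₂ := by
        rcases Classical.em (∃ w, σ.dir v w ∧ w ≠ w₁ ∧ w ≠ w₂) with h | h
        · exact h
        · refine absurd ?_ hall
          intro w hw
          by_contra hc
          exact h ⟨w, hw, fun e => hc (Or.inl e), fun e => hc (Or.inr e)⟩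
      have hem₃ := hem w₃ w₁ hd3 hd1 (fun h => hw31 h.symm)
      have hsub3 : (δ.deleteDir v w₃).IsSubgraph (σ.deleteDir v w₃) :=
        ⟨subset_rfl, fun a b h => ⟨h.1.1.1, h.2⟩, fun a b h => h⟩
      have hδ3mono : ∀ {p q}, Relation.ReflTransGen (δ.deleteDir v w₃).Adj p q →
          Relation.ReflTransGen (σ.deleteDir v w₃).Adj p q :=
        fun h => conn_mono hsub3 h
      have hA1 : (σ.deleteDir v w₃).Adj v w₁ := Or.inl ⟨hd1, fun hc => hw31 hc.2.symm⟩
      have hA2 : (σ.deleteDir v w₃).Adj v w₂ := Or.inl ⟨hd2, fun hc => hw32 hc.2.symm⟩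
      rcases hG1 with ⟨hx1, hy2⟩ | ⟨hx2, hy1⟩
      · have h1 := hδ3mono (conn_delete_of_avoid hG2.1 hx1)
        have h2 := hδ3mono (conn_delete_of_avoid hG2.2 hy2)
        exact hem₃ ((((h1.tail (Adj.symm hA1)).tail hA2)).trans (conn_symm h2))
      · have h1 := hδ3mono (conn_delete_of_avoid hG2.2 hx2)
        have h2 := hδ3mono (conn_delete_of_avoid hG2.1 hy1)
        exact hem₃ ((((h1.tail (Adj.symm hA2)).tail hA1)).trans (conn_symm h2))
  -- assemble
  refine ⟨σ, hsub, ⟨hG.of_subgraph hsub, ⟨⟨x, hxσ⟩, hconn⟩, hdeg⟩,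
    ⟨⟨x, hxσ, hx⟩, ⟨y, hyσ, hy⟩, hroots, ?_⟩⟩
  intro u hu hnr huZ
  exact hnr ⟨hu, fun w hw => hZout u hu huZ w hw⟩

end MixedGraph
namespace MGAux

variable {α : Type*}

lemma pairs_concat : ∀ {A : List α} (hA : A ≠ []) (st : α),
    pairs (A ++ [st]) = pairs A ++ [(A.getLast hA, st)]
  | [], hA, st => absurd rfl hA
  | [a], _, st => rfl
  | a :: b :: A', _, st => by
      simp only [List.cons_append, pairs_cons₂]
      rw [← List.cons_append, pairs_concat (A := b :: A') (by simp) st]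
      have : (b :: A').getLast (by simp) = (a :: b :: A').getLast (by simp) :=
        (List.getLast_cons (by simp)).symm
      rw [this]

lemma mem_pairs_snd_tail : ∀ {L : List α} {pr : α × α}, pr ∈ pairs L → pr.2 ∈ L.tail
  | [], pr, h => by simp [pairs] at h
  | [a], pr, h => by simp [pairs] at h
  | a :: b :: L', pr, h => by
      rcases List.mem_cons.1 h with rfl | h
      · exact List.mem_cons_self
      · exact List.mem_cons_of_mem _ (mem_pairs_snd_tail h)

end MGAux

namespace MixedGraph

open MGAux

variable {V : Type*} {G H : MixedGraph V}

/-- Reverse the orientation of a link. -/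
def flipLink : Link → Link
  | .fwd => .bwd
  | .bwd => .fwd
  | .both => .both

@[simp] lemma headRight_flip (l : Link) : (flipLink l).headRight = l.headLeft := by
  cases l <;> rfl

@[simp] lemma headLeft_flip (l : Link) : (flipLink l).headLeft = l.headRight := by
  cases l <;> rfl

lemma linkOk_flip {a b : V} {l : Link} (h : G.LinkOk a l b) : G.LinkOk b (flipLink l) a := by
  cases l with
  | fwd => exact h
  | bwd => exact h
  | both => exact G.bi_symm h

/-- The steps of the reversed walk. -/
def revSteps (a : V) : List (Link × V) → List (Link × V)
  | [] => []
  | (l, b) :: rest => revSteps b rest ++ [(flipLink l, a)]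

@[simp] lemma revSteps_nil (a : V) : revSteps a ([] : List (Link × V)) = [] := rfl

lemma revSteps_cons (a : V) (l : Link) (b : V) (rest : List (Link × V)) :
    revSteps a ((l, b) :: rest) = revSteps b rest ++ [(flipLink l, a)] := rfl

lemma revSteps_ne_nil (a : V) (l : Link) (b : V) (rest : List (Link × V)) :
    revSteps a ((l, b) :: rest) ≠ [] := by
  rw [revSteps_cons]
  simp

lemma IsWalk.rev {a : V} {s : List (Link × V)} (h : G.IsWalk a s) :
    G.IsWalk (lastVert a s) (revSteps a s) := by
  induction h with
  | nil v => exact IsWalk.nil v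
  | @cons a b l rest hlk htail ih =>
      rw [lastVert_cons, revSteps_cons]
      refine ih.append ?_
      have : G.IsWalk b [(flipLink l, a)] := IsWalk.cons (linkOk_flip hlk) (IsWalk.nil a)
      rcases rest with _ | ⟨⟨l₂, c⟩, rest'⟩
      · simpa using this
      · rw [revSteps_cons, lastVert_append]
        simpa using this

lemma lastVert_revSteps (x a : V) {s : List (Link × V)} (hs : s ≠ []) :
    lastVert x (revSteps a s) = a := by
  rcases s with _ | ⟨⟨l, b⟩, rest⟩
  · exact absurd rfl hs
  · rw [revSteps_cons, lastVert_append]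
    rfl

lemma pathVerts_revSteps : ∀ (a : V) (s : List (Link × V)),
    pathVerts (lastVert a s) (revSteps a s) = (pathVerts a s).reverse := by
  intro a s
  induction s generalizing a with
  | nil => simp
  | cons st rest ih =>
      rcases st with ⟨l, b⟩
      rw [lastVert_cons, revSteps_cons, pathVerts_append, ih b, pathVerts_cons]
      simp

lemma getLast?_revSteps (a : V) (l : Link) (b : V) (rest : List (Link × V)) :
    (revSteps a ((l, b) :: rest)).getLast? = some (flipLink l, a) := by
  rw [revSteps_cons]
  exact List.getLast?_concat

lemma act_flip {Z : Set V} {l l' : Link} {v : V} (h : G.ActiveTriple Z l v l') :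
    G.ActiveTriple Z (flipLink l') v (flipLink l) := by
  rw [ActiveTriple] at h ⊢
  rw [headRight_flip, headLeft_flip, Bool.and_comm]
  exact h

lemma chain'_act_rev {Z : Set V} : ∀ (a : V) {s : List (Link × V)},
    List.Chain' (fun st t => G.ActiveTriple Z st.1 st.2 t.1) s →
    List.Chain' (fun st t => G.ActiveTriple Z st.1 st.2 t.1) (revSteps a s) := by
  intro a s h
  induction s generalizing a with
  | nil => simp [List.Chain']
  | cons st rest ih =>
      rcases st with ⟨l, b⟩
      rw [revSteps_cons]
      refine List.isChain_append.2 ⟨ih b (List.IsChain.tail h), by simp, ?_⟩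
      intro x hx y hy
      rcases rest with _ | ⟨⟨l₂, c⟩, rest'⟩
      · simp at hx
      · rw [getLast?_revSteps] at hx
        obtain rfl := (by simpa using hx : (flipLink l₂, b) = x)
        obtain rfl := (by simpa using hy : (flipLink l, a) = y)
        exact act_flip (List.isChain_cons_cons.1 h).1

open Classical in
/-- The number of "bad" colliders (not ancestors of `Z`) along a walk. -/
noncomputable def bcnt (G : MixedGraph V) (Z : Set V) (s : List (Link × V)) : ℕ :=
  ((pairs s).filter (fun pr => decide (pr.1.1.headRight = true ∧ pr.2.1.headLeft = true ∧
    pr.1.2 ∉ G.AncSet Z))).length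

open Classical in
lemma bcnt_eq_zero_iff {Z : Set V} {s : List (Link × V)} :
    bcnt G Z s = 0 ↔ ∀ pr ∈ pairs s, ¬(pr.1.1.headRight = true ∧ pr.2.1.headLeft = true ∧
      pr.1.2 ∉ G.AncSet Z) := by
  rw [bcnt, List.length_eq_zero_iff, List.filter_eq_nil_iff]
  constructor
  · intro h pr hpr hc
    exact h pr hpr (by simpa using hc)
  · intro h pr hpr
    simpa using h pr hpr

open Classical in
lemma bcnt_pos {Z : Set V} {s : List (Link × V)} (h : bcnt G Z s ≠ 0) :
    ∃ pr ∈ pairs s, pr.1.1.headRight = true ∧ pr.2.1.headLeft = true ∧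
      pr.1.2 ∉ G.AncSet Z := by
  by_contra hc
  push_neg at hc
  exact h (bcnt_eq_zero_iff.2 (fun pr hpr => by
    intro hb
    exact hb.2.2 (hc pr hpr hb.1 hb.2.1)))

open Classical in
lemma bcnt_append_split {Z : Set V} (l₁ : List (Link × V)) (st : Link × V)
    (l₂ : List (Link × V)) :
    bcnt G Z (l₁ ++ st :: l₂) = bcnt G Z (l₁ ++ [st]) + bcnt G Z (st :: l₂) := by
  rw [bcnt, bcnt, bcnt, pairs_append l₁ st l₂, List.filter_append, List.length_append]

open Classical in
lemma bcnt_concat {Z : Set V} {A : List (Link × V)} (hA : A ≠ []) (st : Link × V) :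
    bcnt G Z (A ++ [st]) = bcnt G Z A +
      (if (A.getLast hA).1.headRight = true ∧ st.1.headLeft = true ∧
        (A.getLast hA).2 ∉ G.AncSet Z then 1 else 0) := by
  rw [bcnt, bcnt, pairs_concat hA st, List.filter_append, List.length_append]
  congr 1
  by_cases h : (A.getLast hA).1.headRight = true ∧ st.1.headLeft = true ∧
      (A.getLast hA).2 ∉ G.AncSet Z
  · rw [if_pos h]
    simp [h]
  · rw [if_neg h]
    simp [h]

open Classical in
lemma bcnt_cons₂ {Z : Set V} (l : Link) (v : V) (st : Link × V) (u : List (Link × V)) :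
    bcnt G Z ((l, v) :: st :: u) =
      (if l.headRight = true ∧ st.1.headLeft = true ∧ v ∉ G.AncSet Z then 1 else 0) +
        bcnt G Z (st :: u) := by
  rw [bcnt, bcnt, pairs_cons₂]
  by_cases h : l.headRight = true ∧ st.1.headLeft = true ∧ v ∉ G.AncSet Z
  · rw [if_pos h, List.filter_cons_of_pos (by simpa using h), List.length_cons]
    omega
  · rw [if_neg h, List.filter_cons_of_neg (by simpa using h)]
    omega

open Classical in
lemma bcnt_sublist {Z : Set V} {s₁ s₂ : List (Link × V)}
    (h : (pairs s₁).Sublist (pairs s₂)) : bcnt G Z s₁ ≤ bcnt G Z s₂ :=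
  List.Sublist.length_le (List.Sublist.filter _ h)

lemma bcnt_prefix {Z : Set V} {s₁ s₂ : List (Link × V)} (h : s₁ <+: s₂) :
    bcnt G Z s₁ ≤ bcnt G Z s₂ :=
  bcnt_sublist (pairs_prefix h).sublist

lemma bcnt_suffix {Z : Set V} {s₁ s₂ : List (Link × V)} (h : s₁ <:+ s₂) :
    bcnt G Z s₁ ≤ bcnt G Z s₂ :=
  bcnt_sublist (pairs_suffix h).sublist

open Classical in
lemma bcnt_eq_zero_of {Z : Set V} {s : List (Link × V)}
    (h : ∀ pr ∈ pairs s, ¬(pr.1.1.headRight = true ∧ pr.2.1.headLeft = true ∧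
      pr.1.2 ∉ G.AncSet Z)) : bcnt G Z s = 0 :=
  bcnt_eq_zero_iff.2 h

lemma bcnt_append_fwd {Z : Set V} {A B : List (Link × V)}
    (hB : ∀ st ∈ B, st.1 = Link.fwd) : bcnt G Z (A ++ B) ≤ bcnt G Z A := by
  rcases B with _ | ⟨b₀, B'⟩
  · rw [List.append_nil]
  · rw [bcnt_append_split A b₀ B']
    have h2 : bcnt G Z (b₀ :: B') = 0 := by
      refine bcnt_eq_zero_of (fun pr hpr hc => ?_)
      have : pr.2 ∈ B' := mem_pairs_snd_tail hpr
      have : pr.2.1 = Link.fwd := hB pr.2 (List.mem_cons_of_mem _ this)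
      rw [this] at hc
      exact absurd hc.2.1 (by simp [Link.headLeft])
    rw [h2]
    rcases List.eq_nil_or_concat A with rfl | ⟨I, st, rfl⟩
    · simp [bcnt, pairs]
    · simp only [List.concat_eq_append]
      have hne : I ++ [st] ≠ [] := by simp
      rw [bcnt_concat hne b₀]
      have : b₀.1.headLeft = false := by
        rw [hB b₀ (List.mem_cons_self)]; rfl
      rw [if_neg (by rw [this]; rintro ⟨_, h, _⟩; exact Bool.false_ne_true h)]
      omega

lemma bcnt_append_bwd {Z : Set V} {A B : List (Link × V)}
    (hA : ∀ st ∈ A, st.1 = Link.bwd) : bcnt G Z (A ++ B) ≤ bcnt G Z B := by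
  have hAz : ∀ (C : List (Link × V)), (∀ st ∈ C, st.1 = Link.bwd) → bcnt G Z C = 0 := by
    intro C hC
    refine bcnt_eq_zero_of (fun pr hpr hc => ?_)
    have : pr.1.1 = Link.bwd := hC pr.1 (mem_pairs_mem hpr).1
    rw [this] at hc
    exact absurd hc.1 (by simp [Link.headRight])
  rcases B with _ | ⟨b₀, B'⟩
  · rw [List.append_nil, hAz A hA]
    exact Nat.zero_le _
  · rw [bcnt_append_split A b₀ B']
    have h1 : bcnt G Z (A ++ [b₀]) = 0 := by
      rcases List.eq_nil_or_concat A with rfl | ⟨I, st, rfl⟩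
      · simp [bcnt, pairs]
      · simp only [List.concat_eq_append] at hA ⊢
        have hne : I ++ [st] ≠ [] := by simp
        rw [bcnt_concat hne b₀, hAz _ hA]
        have : ((I ++ [st]).getLast hne).1 = Link.bwd :=
          hA _ (List.getLast_mem hne)
        rw [if_neg (by rw [this]; rintro ⟨h, _, _⟩; exact Bool.false_ne_true h)]
    omega

open Classical in
lemma bcnt_rev {Z : Set V} : ∀ (a : V) (s : List (Link × V)),
    bcnt G Z (revSteps a s) = bcnt G Z s := by
  intro a s
  induction s generalizing a with
  | nil => rfl
  | cons st rest ih =>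
      rcases st with ⟨l, b⟩
      rcases rest with _ | ⟨⟨l₂, c⟩, rest'⟩
      · simp [revSteps_cons, bcnt, pairs]
      · rw [revSteps_cons,
          bcnt_concat (revSteps_ne_nil b l₂ c rest') (flipLink l, a), ih b,
          bcnt_cons₂]
        have hlast : (revSteps b ((l₂, c) :: rest')).getLast (revSteps_ne_nil b l₂ c rest') =
            (flipLink l₂, b) := by
          have := getLast?_revSteps b l₂ c rest'
          rwa [List.getLast?_eq_getLast (revSteps_ne_nil b l₂ c rest'),
            Option.some_inj] at this
        rw [hlast]
        simp only [headRight_flip, headLeft_flip]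
        rw [Nat.add_comm]
        congr 1
        by_cases h1 : l.headRight = true <;> by_cases h2 : l₂.headLeft = true <;>
          by_cases h3 : b ∈ G.AncSet Z <;> simp [h1, h2, h3]

lemma mem_pairs_rev {s : List (Link × V)} {lv l' : Link} {v w : V} (a : V)
    (h : ((lv, v), (l', w)) ∈ pairs s) :
    ∃ st : Link × V, ((flipLink l', v), (flipLink lv, st.2)) ∈ pairs (revSteps a s) ∧
      (flipLink lv, st.2).1 = flipLink lv := by
  induction s generalizing a with
  | nil => simp [pairs] at h
  | cons st₀ rest ih =>
      rcases st₀ with ⟨l₀, b⟩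
      rcases rest with _ | ⟨⟨l₂, c⟩, rest'⟩
      · simp [pairs] at h
      · rcases List.mem_cons.1 h with h | h
        · obtain ⟨h1, h2⟩ := Prod.mk.inj h
          obtain ⟨rfl, rfl⟩ := Prod.mk.inj h1
          obtain ⟨rfl, rfl⟩ := Prod.mk.inj h2
          refine ⟨(flipLink lv, a), ?_, rfl⟩
          rw [revSteps_cons, pairs_concat (revSteps_ne_nil v l' w rest')]
          refine List.mem_append_right _ ?_
          have hlast : (revSteps v ((l', w) :: rest')).getLast (revSteps_ne_nil v l' w rest') =
              (flipLink l', v) := by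
            have := getLast?_revSteps v l' w rest'
            rwa [List.getLast?_eq_getLast (revSteps_ne_nil v l' w rest'),
              Option.some_inj] at this
          rw [hlast]
          exact List.mem_singleton.2 rfl
        · obtain ⟨st, hst, _⟩ := ih b h
          refine ⟨st, ?_, rfl⟩
          rw [revSteps_cons]
          have hpre : pairs (revSteps b ((l₂, c) :: rest')) <+:
              pairs (revSteps b ((l₂, c) :: rest') ++ [(flipLink l₀, a)]) := by
            rw [pairs_concat (revSteps_ne_nil b l₂ c rest')]
            exact ⟨_, rfl⟩
          exact hpre.sublist.mem hst

end MixedGraph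
namespace MGAux

variable {α : Type*}

lemma getLastD_append (A : List α) (u : α) (B : List α) (d : α) :
    (A ++ u :: B).getLastD d = B.getLastD u := by
  induction A generalizing d with
  | nil => exact List.getLastD_cons
  | cons a A' ih => rw [List.cons_append, List.getLastD_cons]; exact ih a

end MGAux

namespace MixedGraph

open MGAux

variable {V : Type*} {G : MixedGraph V}

lemma LinkOk.right_mem {p q : V} {l : Link} (h : G.LinkOk p l q) : q ∈ G.verts := by
  cases l with
  | fwd => exact (G.dir_mem h).2
  | bwd => exact (G.dir_mem h).1
  | both => exact (G.bi_mem h).2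

/-- The end-side surgery: given a bad collider `v` on a path and a directed
path from `v` to `r` in `σ`, produce a path from the same start to `r` with
strictly fewer bad colliders. -/
lemma stepSurgery {σ : MixedGraph V} {Z : Set V} {a v w r : V} {lv l' : Link}
    {t u : List (Link × V)} {D : List V}
    (hw : σ.IsWalk a (t ++ (lv, v) :: (l', w) :: u))
    (hnd : (pathVerts a (t ++ (lv, v) :: (l', w) :: u)).Nodup)
    (hbad : lv.headRight = true ∧ l'.headLeft = true ∧ v ∉ G.AncSet Z)
    (hchD : List.Chain σ.dir v D) (hlastD : D.getLastD v = r)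
    (hndD : (v :: D).Nodup) :
    ∃ steps', σ.IsWalk a steps' ∧ (pathVerts a steps').Nodup ∧ lastVert a steps' = r ∧
      bcnt G Z steps' < bcnt G Z (t ++ (lv, v) :: (l', w) :: u) := by
  classical
  set pre := t ++ [(lv, v)] with hpredef
  have hsteps : t ++ (lv, v) :: (l', w) :: u = pre ++ (l', w) :: u := by
    rw [hpredef, List.append_assoc, List.singleton_append]
  have hw' : σ.IsWalk a (pre ++ (l', w) :: u) := by rwa [hsteps] at hw
  have hwpre : σ.IsWalk a pre := hw'.of_append_left
  have hlpre : lastVert a pre = v := lastVert_concat a t lv v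
  have hvP : v ∈ pathVerts a pre := hlpre ▸ lastVert_mem a pre
  obtain ⟨I₁, u₀, I₂, hID, hu₀P, hI₂⟩ :=
    exists_last_split (S := fun z => z ∈ pathVerts a pre) (l := v :: D)
      ⟨v, List.mem_cons_self, hvP⟩
  obtain ⟨s₁, s₂, hpre12, hlasts₁⟩ := mem_pathVerts_split hu₀P
  have hch' : List.Chain σ.dir u₀ I₂ := by
    have h1 : List.Chain' σ.dir (v :: D) := hchD
    have h2 : (u₀ :: I₂) <:+ (v :: D) := by rw [hID]; exact ⟨I₁, rfl⟩
    exact h1.suffix h2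
  set ds := I₂.map (fun d => (Link.fwd, d)) with hdsdef
  have hwds : σ.IsWalk u₀ ds := chain_walk_of Link.fwd (fun p q h => h) hch'
  have hnds : (pathVerts a pre).Nodup := by
    have hstepsverts : pathVerts a (pre ++ (l', w) :: u) =
        pathVerts a pre ++ ((l', w) :: u).map Prod.snd := pathVerts_append a _ _
    have := hnd
    rw [hsteps, hstepsverts] at this
    exact (List.nodup_append.1 this).1
  have hs₁pre : pathVerts a s₁ <+: pathVerts a pre := by
    rw [hpre12, pathVerts_append]
    exact ⟨_, rfl⟩
  refine ⟨s₁ ++ ds, ?_, ?_, ?_, ?_⟩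
  · refine IsWalk.append ?_ ?_
    · rw [hpre12] at hwpre
      exact hwpre.of_append_left
    · rwa [hlasts₁]
  · rw [pathVerts_append]
    have hmapds : ds.map Prod.snd = I₂ := by
      simp [hdsdef]
    rw [hmapds]
    refine List.nodup_append.2 ⟨hs₁pre.sublist.nodup hnds, ?_, ?_⟩
    · have : I₂ <:+ (v :: D) := ⟨I₁ ++ [u₀], by rw [hID]; simp⟩
      exact this.sublist.nodup hndD
    · intro z hz z' hz2 hzz
      subst hzz
      exact hI₂ z hz2 (hs₁pre.sublist.mem hz)
  · rw [lastVert_append, hlasts₁, lastVert_map_link]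
    have : (v :: D).getLastD v = r := by rw [List.getLastD_cons]; exact hlastD
    rw [hID, getLastD_append] at this
    exact this
  · have h1 : bcnt G Z (s₁ ++ ds) ≤ bcnt G Z s₁ :=
      bcnt_append_fwd (by
        intro st hst
        rw [hdsdef] at hst
        obtain ⟨d, _, rfl⟩ := List.mem_map.1 hst
        rfl)
    have h2 : bcnt G Z s₁ ≤ bcnt G Z pre := bcnt_prefix ⟨s₂, hpre12.symm⟩
    have h3 : bcnt G Z (t ++ (lv, v) :: (l', w) :: u) =
        bcnt G Z pre + bcnt G Z ((lv, v) :: (l', w) :: u) :=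
      bcnt_append_split t (lv, v) ((l', w) :: u)
    have h4 : bcnt G Z ((lv, v) :: (l', w) :: u) =
        1 + bcnt G Z ((l', w) :: u) := by
      rw [bcnt_cons₂, if_pos hbad]
    omega

lemma backward [Fintype V] (hG : G.IsADMG) {X Y Z : Set V}
    (hXZ : Disjoint X Z) (hYZ : Disjoint Y Z) {σ : MixedGraph V}
    (hsub : σ.IsSubgraph G) (hconn : σ.Connected)
    (hX : (σ.verts ∩ X).Nonempty) (hY : (σ.verts ∩ Y).Nonempty)
    (hroots : σ.roots ⊆ X ∪ Y ∪ Z)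
    (hnr : ∀ v ∈ σ.verts, ¬ σ.IsRoot v → v ∉ Z) :
    G.DConnected X Y Z := by
  classical
  have hσadmg := hG.of_subgraph hsub
  have hσacy : σ.Acyclic := hσadmg.1
  have hZnoout : ∀ v, v ∈ Z → ∀ w, ¬ σ.dir v w :=
    fun v hvZ w hw => hnr v (σ.dir_mem hw).1 (fun hr => hr.2 w hw) hvZ
  have hXZd : ∀ {z}, z ∈ X → z ∉ Z := fun h => Set.disjoint_left.1 hXZ h
  have hYZd : ∀ {z}, z ∈ Y → z ∉ Z := fun h => Set.disjoint_left.1 hYZ h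
  -- base: a path with no bad collider is active
  have hbase : ∀ (A B : Set V), ((A = X ∧ B = Y) ∨ (A = Y ∧ B = X)) →
      ∀ (a : V) (steps : List (Link × V)), σ.IsWalk a steps →
      (pathVerts a steps).Nodup → a ∈ A → lastVert a steps ∈ B →
      bcnt G Z steps = 0 → G.DConnected X Y Z := by
    intro A B hAB a steps hw hnd ha hb h0
    have hact : List.Chain' (fun st t => G.ActiveTriple Z st.1 st.2 t.1) steps := by
      rw [chain'_iff_pairs]
      rintro ⟨⟨l1, vv⟩, ⟨l2, ww⟩⟩ hpr
      show G.ActiveTriple Z l1 vv l2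
      by_cases hcol : l1.headRight = true ∧ l2.headLeft = true
      · have hanc : vv ∈ G.AncSet Z := by
          by_contra hn
          exact (bcnt_eq_zero_iff.1 h0) _ hpr ⟨hcol.1, hcol.2, hn⟩
        rw [ActiveTriple, if_pos (by rw [hcol.1, hcol.2]; rfl)]
        exact hanc
      · obtain ⟨⟨p, hptrip⟩, hvtrip⟩ := mem_pairs_steps_triples (a := a) hpr
        have hout : ∃ q, σ.dir vv q := by
          rcases Decidable.not_and_iff_or_not .. |>.1 hcol with h | h
          · have hl1 : l1 = Link.bwd := link_eq_bwd (by
              cases hx : l1.headRight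
              · rfl
              · exact absurd hx h)
            subst hl1
            exact ⟨p, hw.linkOk_of_mem_triples hptrip⟩
          · have hl2 : l2 = Link.fwd := link_eq_fwd (by
              cases hx : l2.headLeft
              · rfl
              · exact absurd hx h)
            subst hl2
            exact ⟨ww, hw.linkOk_of_mem_triples hvtrip⟩
        obtain ⟨q, hq⟩ := hout
        have hvvZ : vv ∉ Z := fun hZ => hZnoout vv hZ q hq
        rw [ActiveTriple, if_neg (by
          intro hc
          simp only [Bool.and_eq_true] at hc
          exact hcol hc)]
        exact hvvZ
    rcases hAB with ⟨rfl, rfl⟩ | ⟨rfl, rfl⟩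
    · exact ⟨a, steps, ⟨hw.mono hsub, hnd⟩, ha, hb, hXZd ha, hYZd hb, hact⟩
    · refine ⟨lastVert a steps, revSteps a steps, ⟨(hw.rev).mono hsub, ?_⟩, hb, ?_, hXZd hb,
        ?_, chain'_act_rev a hact⟩
      · rw [pathVerts_revSteps]
        exact List.nodup_reverse.2 hnd
      · rcases steps with _ | ⟨⟨l₀, b₀⟩, rest⟩
        · simpa using ha
        · rw [lastVert_revSteps _ _ (by simp)]
          exact ha
      · rcases steps with _ | ⟨⟨l₀, b₀⟩, rest⟩
        · simpa using hYZd ha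
        · rw [lastVert_revSteps _ _ (by simp)]
          exact hYZd ha
  -- main induction on the number of bad colliders
  have key : ∀ (n : ℕ) (A B : Set V), ((A = X ∧ B = Y) ∨ (A = Y ∧ B = X)) →
      ∀ (a : V) (steps : List (Link × V)), σ.IsWalk a steps →
      (pathVerts a steps).Nodup → a ∈ A → lastVert a steps ∈ B →
      bcnt G Z steps ≤ n → G.DConnected X Y Z := by
    intro n
    induction n with
    | zero =>
        intro A B hAB a steps hw hnd ha hb hbc
        exact hbase A B hAB a steps hw hnd ha hb (Nat.le_zero.1 hbc)
    | succ n ih =>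
        intro A B hAB a steps hw hnd ha hb hbc
        by_cases h0 : bcnt G Z steps = 0
        · exact hbase A B hAB a steps hw hnd ha hb h0
        obtain ⟨pr, hprmem, hpr⟩ := bcnt_pos h0
        rcases pr with ⟨⟨lv, v⟩, ⟨l', w⟩⟩
        obtain ⟨hh1, hh2, hh3⟩ := hpr
        obtain ⟨t, u, hsteps⟩ := mem_pairs_split hprmem
        subst hsteps
        have hw' : σ.IsWalk a ((t ++ [(lv, v)]) ++ (l', w) :: u) := by
          rwa [List.append_assoc, List.singleton_append]
        have hvσ : v ∈ σ.verts := by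
          have h2 := hw'.of_append_left.of_append_right (s := t) (t := [(lv, v)])
          cases h2 with
          | cons hlk _ => exact hlk.right_mem
        obtain ⟨r, hvr, hrroot⟩ := exists_root_descendant hσacy v hvσ
        have hrXY : r ∈ X ∪ Y := by
          rcases hroots hrroot with (h | h) | h
          · exact Or.inl h
          · exact Or.inr h
          · exact absurd (⟨r, h, hvr.mono hsub⟩ : v ∈ G.AncSet Z) hh3
        obtain ⟨D, hchD, hlastD⟩ := rtg_list hvr
        have hndD := chain_nodup hσacy hchD
        have hrAB : r ∈ A ∪ B := by
          rcases hAB with ⟨rfl, rfl⟩ | ⟨rfl, rfl⟩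
          · exact hrXY
          · rcases hrXY with h | h
            · exact Or.inr h
            · exact Or.inl h
        rcases hrAB with hrA | hrB
        · -- flip the path around and do the surgery at its end
          set bR := lastVert a (t ++ (lv, v) :: (l', w) :: u) with hbRdef
          have hwR : σ.IsWalk bR (revSteps a (t ++ (lv, v) :: (l', w) :: u)) := hw.rev
          have hndR : (pathVerts bR (revSteps a (t ++ (lv, v) :: (l', w) :: u))).Nodup := by
            rw [hbRdef, pathVerts_revSteps]
            exact List.nodup_reverse.2 hnd
          obtain ⟨st, hstmem, _⟩ := mem_pairs_rev a hprmem
          obtain ⟨t', u', hstepsR⟩ := mem_pairs_split hstmem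
          rw [hstepsR] at hwR hndR
          obtain ⟨steps', hw1, hnd1, hlast1, hlt1⟩ :=
            stepSurgery (G := G) (Z := Z) hwR hndR
              (by
                refine ⟨?_, ?_, hh3⟩
                · rw [headRight_flip]; exact hh2
                · rw [headLeft_flip]; exact hh1)
              hchD hlastD hndD
          have hbcR : bcnt G Z (t' ++ (flipLink l', v) :: (flipLink lv, st.2) :: u') =
              bcnt G Z (t ++ (lv, v) :: (l', w) :: u) := by
            rw [← hstepsR, bcnt_rev]
          have hABswap : ((B = X ∧ A = Y) ∨ (B = Y ∧ A = X)) := by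
            rcases hAB with ⟨rfl, rfl⟩ | ⟨rfl, rfl⟩
            · exact Or.inr ⟨rfl, rfl⟩
            · exact Or.inl ⟨rfl, rfl⟩
          exact ih B A hABswap bR steps' hw1 hnd1 hb (hlast1 ▸ hrA) (by omega)
        · -- direct surgery at the end
          obtain ⟨steps', hw1, hnd1, hlast1, hlt1⟩ :=
            stepSurgery (G := G) (Z := Z) hw hnd ⟨hh1, hh2, hh3⟩ hchD hlastD hndD
          exact ih A B hAB a steps' hw1 hnd1 ha (hlast1 ▸ hrB) (by omega)
  -- assemble: take any path from X to Y in σ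
  obtain ⟨x, hxσ, hxX⟩ := hX
  obtain ⟨y, hyσ, hyY⟩ := hY
  obtain ⟨s, hws, hlast⟩ := connToWalk (hconn.2 x hxσ y hyσ)
  obtain ⟨s', hw', hnd', hlast', _⟩ := walkToPath s.length le_rfl hws
  exact key (bcnt G Z s') X Y (Or.inl ⟨rfl, rfl⟩) x s' hw' hnd' hxX
    (by rw [hlast', hlast]; exact hyY) le_rfl

end MixedGraph
/-- D-connection with structures of interest.
Let `G` be an ADMG and `X, Y, Z` pairwise disjoint subsets of its vertices.
Then `X` and `Y` are d-connected given `Z` in `G` iff `G` contains a structure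
of interest `σ` (as a subgraph) that connects `X` and `Y` under `Z`. -/
theorem stmt0 {V : Type} [Fintype V] (G : MixedGraph V) (hG : G.IsADMG)
    (X Y Z : Set V) (hXV : X ⊆ G.verts) (hYV : Y ⊆ G.verts) (hZV : Z ⊆ G.verts)
    (hXY : Disjoint X Y) (hXZ : Disjoint X Z) (hYZ : Disjoint Y Z) :
    G.DConnected X Y Z ↔
      ∃ σ : MixedGraph V, σ.IsSubgraph G ∧ σ.IsSOI ∧ σ.Connects X Y Z := by
  constructor
  · intro h
    obtain ⟨W, hWsub, hWconn, hWX, hWY, hWroots, hWZ⟩ := exists_witness hXV h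
    obtain ⟨x, hxW, hxX⟩ := hWX
    obtain ⟨y, hyW, hyY⟩ := hWY
    exact prune hG hxX hyY hWsub hxW hyW hWconn.2 hWroots hWZ
  · rintro ⟨σ, hsub, hSOI, hConn⟩
    exact backward hG hXZ hYZ hsub hSOI.2.1 hConn.1 hConn.2.1 hConn.2.2.1 hConn.2.2.2
end

section
/- Let G^C be a C-DAG and let G^m be a compatible ADMG in which, within each cluster, the indices of the vertices follow a topological order of G^m. Suppose G^m contains a directed edge V_i → W_w from the i-th vertex of a cluster V to a vertex W_w, and let j < i. Then adding the directed edge V_j → W_w to G^m creates no directed cycle, and the graph obtained by adding V_j → W_w (and, if desired, additionally deleting V_i → W_w) is an ADMG compatible with G^C. -/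
open MixedGraph

/-- move an outgoing arrow up. If `G^m` (compatible, with
within-cluster indices following a topological order) contains `V_i → W_w` and
`j < i` (here `a = V_i`, `a' = V_j`, same cluster, `a' < a`), then adding
`V_j → W_w` creates no directed cycle and the resulting graph (and the one
additionally deleting `V_i → W_w`) is an ADMG compatible with `G^C`. -/
theorem stmt3 {V C : Type} [Fintype V] [LinearOrder V]
    (π : V → C) (hπ : Function.Surjective π)
    (GC : MixedGraph C) (hGCverts : GC.verts = Set.univ)
    (G : MixedGraph V) (hG : MixedGraph.Compatible π GC G)
    (htopo : MixedGraph.FollowsTopo π G)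
    (a a' w : V) (hcl : π a' = π a) (hlt : a' < a) (hdir : G.dir a w) :
    (G.addDir a' w).Acyclic ∧
    MixedGraph.Compatible π GC (G.addDir a' w) ∧
    MixedGraph.Compatible π GC ((G.addDir a' w).deleteDir a w) := by
  obtain ⟨hADMG, hverts, hdirIff, hbiIff⟩ := hG
  obtain ⟨t, htinj, htdir, htcl⟩ := htopo
  have htaw : t a < t w := htdir hdir
  have hta : t a' < t a := htcl hcl hlt
  have htaw' : t a' < t w := hta.trans htaw
  have hne : a' ≠ w := fun h => by subst h; exact lt_irrefl _ htaw'
  have hnea : a' ≠ a := ne_of_lt hlt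
  -- monotonicity of t on the new graph's edges
  have hmono : ∀ ⦃x y : V⦄, (G.addDir a' w).dir x y → t x < t y := by
    rintro x y (h | ⟨rfl, rfl⟩)
    · exact htdir h
    · exact htaw'
  have hacyc : (G.addDir a' w).Acyclic := by
    intro x y hxy hanc
    have : ∀ u v, Relation.ReflTransGen (G.addDir a' w).dir u v → t u ≤ t v := by
      intro u v h
      induction h with
      | refl => exact le_rfl
      | tail h1 h2 ih => exact ih.trans (hmono h2).le
    exact absurd (hmono hxy) (not_lt.mpr (this _ _ hanc))
  have hmono' : ∀ ⦃x y : V⦄, ((G.addDir a' w).deleteDir a w).dir x y → t x < t y :=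
    fun x y h => hmono h.1
  have hacyc' : ((G.addDir a' w).deleteDir a w).Acyclic := by
    intro x y hxy hanc
    have : ∀ u v, Relation.ReflTransGen ((G.addDir a' w).deleteDir a w).dir u v → t u ≤ t v := by
      intro u v h
      induction h with
      | refl => exact le_rfl
      | tail h1 h2 ih => exact ih.trans (hmono' h2).le
    exact absurd (hmono' hxy) (not_lt.mpr (this _ _ hanc))
  have hnoloop : ∀ v, ¬ (G.addDir a' w).dir v v := by
    rintro v (h | ⟨h1, h2⟩)
    · exact hADMG.2.1 v h
    · exact hne (h1.symm.trans h2)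
  have hvadd : (G.addDir a' w).verts = Set.univ := by
    simp [MixedGraph.addDir, hverts]
  have hGCaw : GC.dir (π a) (π w) := (hdirIff _ _).mpr ⟨a, w, rfl, rfl, hdir⟩
  refine ⟨hacyc, ⟨⟨hacyc, hnoloop, hADMG.2.2⟩, hvadd, ?_, ?_⟩,
    ⟨⟨hacyc', fun v h => hnoloop v h.1, hADMG.2.2⟩, hvadd, ?_, ?_⟩⟩
  · intro c d
    constructor
    · intro h
      obtain ⟨x, y, hx, hy, hxy⟩ := (hdirIff c d).mp h
      exact ⟨x, y, hx, hy, Or.inl hxy⟩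
    · rintro ⟨x, y, hx, hy, h | ⟨rfl, rfl⟩⟩
      · exact (hdirIff c d).mpr ⟨x, y, hx, hy, h⟩
      · rw [← hx, ← hy, hcl]; exact hGCaw
  · exact hbiIff
  · intro c d
    constructor
    · intro h
      obtain ⟨x, y, hx, hy, hxy⟩ := (hdirIff c d).mp h
      by_cases hc : x = a ∧ y = w
      · refine ⟨a', w, ?_, ?_, Or.inr ⟨rfl, rfl⟩, fun hc' => hnea hc'.1⟩
        · rw [hcl, ← hc.1]; exact hx
        · rw [← hc.2]; exact hy
      · exact ⟨x, y, hx, hy, Or.inl hxy, hc⟩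
    · rintro ⟨x, y, hx, hy, h | ⟨rfl, rfl⟩, -⟩
      · exact (hdirIff c d).mpr ⟨x, y, hx, hy, h⟩
      · rw [← hx, ← hy, hcl]; exact hGCaw
  · exact hbiIff
end

section
/- Let G be an ADMG and let X, Y, Z be pairwise disjoint subsets of its vertices. Let σ be a structure of interest such that: σ is a subgraph of G; σ contains a vertex of X and a vertex of Y; and no non-root vertex of σ lies in Z. If there exists a root R of σ with R ∉ Z such that R is an ancestor of Z in G, then G contains a structure of interest σ' such that: (a) σ' is a subgraph of G; (b) σ' contains a vertex of X and a vertex of Y; (c) no non-root vertex of σ' lies in Z; and (d) Root(σ') \ Z ⊆ (Root(σ) \ Z) \ {R}. -/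
open MixedGraph

section Stmt6Aux

open Relation

namespace MixedGraph

variable {V : Type*}

lemma adj_symm' (G : MixedGraph V) : Symmetric G.Adj := by
  intro a b h
  rcases h with h | h | h
  · exact Or.inr (Or.inl h)
  · exact Or.inl h
  · exact Or.inr (Or.inr (G.bi_symm h))

/-- Adding a directed edge from a root `R` to a vertex `s` that is not a fork
of `σ` preserves the SOI structure. -/
lemma lemA (G σ : MixedGraph V) (hG : G.IsADMG) (Z : Set V)
    (hσ : σ.IsSOI) (hsub : σ.IsSubgraph G)
    (hZ : ∀ v ∈ σ.verts, ¬ σ.IsRoot v → v ∉ Z)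
    (R s : V) (hR : σ.IsRoot R) (hRZ : R ∉ Z) (hRs : G.dir R s)
    (Hs : ∀ ⦃w₁ w₂ : V⦄, σ.dir s w₁ → σ.dir s w₂ → w₁ = w₂) :
    (σ.addDir R s).IsSOI ∧ (σ.addDir R s).IsSubgraph G ∧
      (∀ v ∈ (σ.addDir R s).verts, ¬ (σ.addDir R s).IsRoot v → v ∉ Z) ∧
      (σ.addDir R s).roots ⊆ (σ.roots \ {R}) ∪ {s} := by
  set σ' := σ.addDir R s with hσ'
  have hRne : R ≠ s := by
    rintro rfl
    exact hG.2.1 R hRs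
  have hdir' : ∀ a b : V, σ'.dir a b ↔ σ.dir a b ∨ (a = R ∧ b = s) := fun a b => Iff.rfl
  have hdRs' : σ'.dir R s := Or.inr ⟨rfl, rfl⟩
  have hdsub : ∀ ⦃a b : V⦄, σ'.dir a b → G.dir a b := by
    rintro a b (h | ⟨rfl, rfl⟩)
    · exact hsub.2.1 h
    · exact hRs
  have hsubG : σ'.IsSubgraph G := by
    refine ⟨?_, hdsub, fun a b h => hsub.2.2 h⟩
    rintro v (hv | hv)
    · exact hsub.1 hv
    · rcases hv with rfl | hv
      · exact (G.dir_mem hRs).1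
      · rw [Set.mem_singleton_iff] at hv; subst hv; exact (G.dir_mem hRs).2
  have hADMG : σ'.IsADMG := by
    refine ⟨?_, ?_, fun v h => hσ.1.2.2 v h⟩
    · intro a b hab hanc
      exact hG.1 (hdsub hab) (ReflTransGen.mono (fun a b h => hdsub h) _ _ hanc)
    · rintro v (h | ⟨rfl, h⟩)
      · exact hσ.1.2.1 v h
      · exact hRne h
  have hadjlift : ∀ ⦃a b : V⦄, σ.Adj a b → σ'.Adj a b := by
    rintro a b (h | h | h)
    · exact Or.inl (Or.inl h)
    · exact Or.inr (Or.inl (Or.inl h))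
    · exact Or.inr (Or.inr h)
  have hsymm' : Symmetric σ'.Adj := σ'.adj_symm'
  have hreachR : ∀ v ∈ σ'.verts, ReflTransGen σ'.Adj v R := by
    rintro v (hv | hv)
    · exact ReflTransGen.mono (fun a b h => hadjlift h) _ _ (hσ.2.1.2 v hv R hR.1)
    · rcases hv with rfl | hv
      · exact ReflTransGen.refl
      · rw [Set.mem_singleton_iff] at hv; subst hv
        exact ReflTransGen.single (Or.inr (Or.inl hdRs'))
  have hconn : σ'.Connected := by
    refine ⟨?_, fun a ha b hb => (hreachR a ha).trans
      ((@ReflTransGen.stdSymm _ _ ⟨fun _ _ h => hsymm' h⟩).symm _ _ (hreachR b hb))⟩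
    obtain ⟨x, hx⟩ := hσ.2.1.1
    exact ⟨x, Or.inl hx⟩
  have hdeg : ∀ v ∈ σ'.verts,
      (∀ ⦃w₁ w₂ : V⦄, σ'.dir v w₁ → σ'.dir v w₂ → w₁ = w₂) ∨
      ((∃ w₁ w₂, w₁ ≠ w₂ ∧ σ'.dir v w₁ ∧ σ'.dir v w₂ ∧
          ∀ w, σ'.dir v w → w = w₁ ∨ w = w₂) ∧
        (∀ w, ¬ σ'.dir w v) ∧ (∀ w, ¬ σ'.bi v w)) := by
    intro v hv
    by_cases hvR : v = R
    · subst hvR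
      left
      rintro w₁ w₂ (h1 | ⟨-, rfl⟩) (h2 | ⟨-, rfl⟩)
      · exact (hR.2 w₁ h1).elim
      · exact (hR.2 w₁ h1).elim
      · exact (hR.2 w₂ h2).elim
      · rfl
    · have hout : ∀ w, σ'.dir v w ↔ σ.dir v w := by
        intro w
        constructor
        · rintro (h | ⟨rfl, -⟩)
          · exact h
          · exact absurd rfl hvR
        · exact Or.inl
      by_cases hvmem : v ∈ σ.verts
      · rcases hσ.2.2 v hvmem with h | ⟨⟨w₁, w₂, hw, d1, d2, hA⟩, hI, hB⟩
        · left
          intro w₁ w₂ a b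
          exact h ((hout _).1 a) ((hout _).1 b)
        · have hvs : v ≠ s := by
            rintro rfl
            exact hw (Hs d1 d2)
          right
          refine ⟨⟨w₁, w₂, hw, (hout _).2 d1, (hout _).2 d2,
            fun w hww => hA w ((hout w).1 hww)⟩, ?_, hB⟩
          rintro w (h | ⟨rfl, h2⟩)
          · exact hI w h
          · exact hvs h2
      · left
        intro w₁ w₂ a b
        exact absurd (σ.dir_mem ((hout _).1 a)).1 hvmem
  have hSOI : σ'.IsSOI := ⟨hADMG, hconn, hdeg⟩
  refine ⟨hSOI, hsubG, ?_, ?_⟩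
  · intro v hv hnr
    have hex : ∃ w, σ'.dir v w := by
      by_contra h
      push_neg at h
      exact hnr ⟨hv, h⟩
    obtain ⟨w, hw | ⟨rfl, -⟩⟩ := hex
    · exact hZ v (σ.dir_mem hw).1 fun hr => hr.2 w hw
    · exact hRZ
  · intro v hv
    by_cases hvs : v = s
    · exact Or.inr hvs
    · have hvR : v ≠ R := by
        rintro rfl
        exact hv.2 s hdRs'
      have hvmem : v ∈ σ.verts := by
        rcases hv.1 with h | h
        · exact h
        · rcases h with rfl | h
          · exact absurd rfl hvR
          · rw [Set.mem_singleton_iff] at h; exact absurd h hvs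
      exact Or.inl ⟨⟨hvmem, fun w hw => hv.2 w (Or.inl hw)⟩, hvR⟩

/-- Fork surgery: if the new edge would point at a fork `s` of `σ`, delete the
fork edge on the side of `R` and add the edge `R → s`. -/
lemma lemB (G σ : MixedGraph V) (hG : G.IsADMG) (Z : Set V)
    (hσ : σ.IsSOI) (hsub : σ.IsSubgraph G)
    (hZ : ∀ v ∈ σ.verts, ¬ σ.IsRoot v → v ∉ Z)
    (R s c₁ c₂ : V) (hR : σ.IsRoot R) (hRZ : R ∉ Z) (hRs : G.dir R s)
    (hne : c₁ ≠ c₂) (h1 : σ.dir s c₁) (h2 : σ.dir s c₂)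
    (hall : ∀ w, σ.dir s w → w = c₁ ∨ w = c₂)
    (hnin : ∀ w, ¬ σ.dir w s) (hnbi : ∀ w, ¬ σ.bi s w)
    (Hreach : Relation.ReflTransGen (fun a b => σ.Adj a b ∧ a ≠ s ∧ b ≠ s) R c₂) :
    ∃ σ' : MixedGraph V, σ'.IsSOI ∧ σ'.IsSubgraph G ∧ σ.verts ⊆ σ'.verts ∧
      (∀ v ∈ σ'.verts, ¬ σ'.IsRoot v → v ∉ Z) ∧
      σ'.roots \ Z ⊆ (σ.roots \ Z) \ {R} := by
  set σ' := (σ.deleteDir s c₂).addDir R s with hσ'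
  have hsv : s ∈ σ.verts := (σ.dir_mem h1).1
  have hRne : R ≠ s := by
    rintro rfl
    exact hR.2 c₁ h1
  have hdir' : ∀ a b : V,
      σ'.dir a b ↔ (σ.dir a b ∧ ¬(a = s ∧ b = c₂)) ∨ (a = R ∧ b = s) :=
    fun a b => Iff.rfl
  have hbi' : ∀ a b : V, σ'.bi a b ↔ σ.bi a b := fun a b => Iff.rfl
  have hverts : σ'.verts = σ.verts := by
    apply Set.union_eq_self_of_subset_right
    rintro x (rfl | hx)
    · exact hR.1
    · rw [Set.mem_singleton_iff] at hx; subst hx; exact hsv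
  have hdRs' : σ'.dir R s := Or.inr ⟨rfl, rfl⟩
  have hdsc₁ : σ'.dir s c₁ := Or.inl ⟨h1, fun h => hne h.2⟩
  have hdsub : ∀ ⦃a b : V⦄, σ'.dir a b → G.dir a b := by
    rintro a b (⟨h, -⟩ | ⟨rfl, rfl⟩)
    · exact hsub.2.1 h
    · exact hRs
  have hsubG : σ'.IsSubgraph G := by
    refine ⟨?_, hdsub, fun a b h => hsub.2.2 h⟩
    rw [hverts]; exact hsub.1
  have hADMG : σ'.IsADMG := by
    refine ⟨?_, ?_, fun v h => hσ.1.2.2 v h⟩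
    · intro a b hab hanc
      exact hG.1 (hdsub hab) (ReflTransGen.mono (fun a b h => hdsub h) _ _ hanc)
    · rintro v (⟨h, -⟩ | ⟨rfl, h⟩)
      · exact hσ.1.2.1 v h
      · exact hRne h
  have hsymm' : Symmetric σ'.Adj := σ'.adj_symm'
  have hrsub : ∀ ⦃a b : V⦄, (σ.Adj a b ∧ a ≠ s ∧ b ≠ s) → σ'.Adj a b := by
    rintro a b ⟨hadj, has, hbs⟩
    rcases hadj with h | h | h
    · exact Or.inl (Or.inl ⟨h, fun hc => has hc.1⟩)
    · exact Or.inr (Or.inl (Or.inl ⟨h, fun hc => hbs hc.1⟩))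
    · exact Or.inr (Or.inr h)
  have hc2R : ReflTransGen σ'.Adj c₂ R :=
    (@ReflTransGen.stdSymm _ _ ⟨fun _ _ h => hsymm' h⟩).symm _ _
      (ReflTransGen.mono (fun a b h => hrsub h) _ _ Hreach)
  have hc2s : ReflTransGen σ'.Adj c₂ s := hc2R.tail (Or.inl hdRs')
  have key : ∀ v, ReflTransGen σ.Adj s v → ReflTransGen σ'.Adj v s := by
    intro v h
    induction h with
    | refl => exact ReflTransGen.refl
    | @tail b c hab hbc ih =>
      rcases hbc with hd | hd | hd
      · by_cases hsc : b = s ∧ c = c₂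
        · exact hsc.2 ▸ hc2s
        · exact (ReflTransGen.single (hsymm' (Or.inl (Or.inl ⟨hd, hsc⟩)))).trans ih
      · by_cases hsc : c = s ∧ b = c₂
        · exact hsc.1 ▸ ReflTransGen.refl
        · exact (ReflTransGen.single
            (hsymm' (Or.inr (Or.inl (Or.inl ⟨hd, hsc⟩))))).trans ih
      · exact (ReflTransGen.single (hsymm' (Or.inr (Or.inr hd)))).trans ih
  have hreachs : ∀ v ∈ σ'.verts, ReflTransGen σ'.Adj v s := by
    intro v hv
    rw [hverts] at hv
    exact key v (hσ.2.1.2 s hsv v hv)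
  have hconn : σ'.Connected := by
    refine ⟨⟨s, ?_⟩, fun a ha b hb => (hreachs a ha).trans
      ((@ReflTransGen.stdSymm _ _ ⟨fun _ _ h => hsymm' h⟩).symm _ _ (hreachs b hb))⟩
    rw [hverts]; exact hsv
  have hdeg : ∀ v ∈ σ'.verts,
      (∀ ⦃w₁ w₂ : V⦄, σ'.dir v w₁ → σ'.dir v w₂ → w₁ = w₂) ∨
      ((∃ w₁ w₂, w₁ ≠ w₂ ∧ σ'.dir v w₁ ∧ σ'.dir v w₂ ∧
          ∀ w, σ'.dir v w → w = w₁ ∨ w = w₂) ∧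
        (∀ w, ¬ σ'.dir w v) ∧ (∀ w, ¬ σ'.bi v w)) := by
    intro v hv
    by_cases hvR : v = R
    · subst hvR
      left
      rintro w₁ w₂ (⟨h1', -⟩ | ⟨-, rfl⟩) (⟨h2', -⟩ | ⟨-, rfl⟩)
      · exact (hR.2 w₁ h1').elim
      · exact (hR.2 w₁ h1').elim
      · exact (hR.2 w₂ h2').elim
      · rfl
    · by_cases hvs : v = s
      · subst hvs
        left
        rintro w₁ w₂ (⟨hd1, hn1⟩ | ⟨h, -⟩) e2
        · rcases e2 with ⟨hd2, hn2⟩ | ⟨h, -⟩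
          · have e1 : w₁ = c₁ := by
              rcases hall w₁ hd1 with h | h
              · exact h
              · exact absurd ⟨rfl, h⟩ hn1
            have e2 : w₂ = c₁ := by
              rcases hall w₂ hd2 with h | h
              · exact h
              · exact absurd ⟨rfl, h⟩ hn2
            rw [e1, e2]
          · exact absurd h.symm hRne
        · exact absurd h.symm hRne
      · have hout : ∀ w, σ'.dir v w ↔ σ.dir v w := by
          intro w
          constructor
          · rintro (⟨h, -⟩ | ⟨rfl, -⟩)
            · exact h
            · exact absurd rfl hvR
          · intro h
            exact Or.inl ⟨h, fun hc => hvs hc.1⟩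
        have hvmem : v ∈ σ.verts := by rw [hverts] at hv; exact hv
        rcases hσ.2.2 v hvmem with h | ⟨⟨w₁, w₂, hw, d1, d2, hA⟩, hI, hB⟩
        · left
          intro w₁ w₂ a b
          exact h ((hout _).1 a) ((hout _).1 b)
        · right
          refine ⟨⟨w₁, w₂, hw, (hout _).2 d1, (hout _).2 d2,
            fun w hww => hA w ((hout w).1 hww)⟩, ?_, hB⟩
          rintro w (⟨h, -⟩ | ⟨-, h2⟩)
          · exact hI w h
          · exact hvs h2
  refine ⟨σ', ⟨hADMG, hconn, hdeg⟩, hsubG, by rw [hverts], ?_, ?_⟩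
  · intro v hv hnr
    have hex : ∃ w, σ'.dir v w := by
      by_contra h
      push_neg at h
      exact hnr ⟨hv, h⟩
    obtain ⟨w, ⟨hd, -⟩ | ⟨rfl, -⟩⟩ := hex
    · exact hZ v (σ.dir_mem hd).1 fun hr => hr.2 w hd
    · exact hRZ
  · rintro v ⟨hv, hvZ⟩
    have hvs : v ≠ s := by
      rintro rfl
      exact hv.2 c₁ hdsc₁
    have hvR : v ≠ R := by
      rintro rfl
      exact hv.2 s hdRs'
    have hvmem : v ∈ σ.verts := by rw [← hverts]; exact hv.1
    refine ⟨⟨⟨hvmem, fun w hw => hv.2 w (Or.inl ⟨hw, fun hc => hvs hc.1⟩)⟩, hvZ⟩, hvR⟩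

/-- Dichotomy: any vertex `R ≠ s` of a connected `σ` connects to one of the two
children of the fork `s` avoiding `s`. -/
lemma dichotomy (σ : MixedGraph V) (hconn : σ.Connected) (s c₁ c₂ : V)
    (hall : ∀ w, σ.dir s w → w = c₁ ∨ w = c₂)
    (hnin : ∀ w, ¬ σ.dir w s) (hnbi : ∀ w, ¬ σ.bi s w)
    (R : V) (hRv : R ∈ σ.verts) (hsv : s ∈ σ.verts) (hRne : R ≠ s) :
    Relation.ReflTransGen (fun a b => σ.Adj a b ∧ a ≠ s ∧ b ≠ s) R c₁ ∨
    Relation.ReflTransGen (fun a b => σ.Adj a b ∧ a ≠ s ∧ b ≠ s) R c₂ := by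
  set r := fun a b => σ.Adj a b ∧ a ≠ s ∧ b ≠ s with hr
  have hrsymm : ∀ ⦃a b : V⦄, r a b → r b a := by
    rintro a b ⟨h, ha, hb⟩
    exact ⟨σ.adj_symm' h, hb, ha⟩
  have key : ∀ v, ReflTransGen σ.Adj s v →
      v = s ∨ ReflTransGen r v c₁ ∨ ReflTransGen r v c₂ := by
    intro v h
    induction h with
    | refl => exact Or.inl rfl
    | @tail b c hab hbc ih =>
      by_cases hcs : c = s
      · exact Or.inl hcs
      by_cases hbs : b = s
      · subst hbs
        rcases hbc with hd | hd | hd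
        · rcases hall c hd with rfl | rfl
          · exact Or.inr (Or.inl ReflTransGen.refl)
          · exact Or.inr (Or.inr ReflTransGen.refl)
        · exact absurd hd (hnin c)
        · exact absurd hd (hnbi c)
      · have hrcb : r c b := ⟨σ.adj_symm' hbc, hcs, hbs⟩
        rcases ih with rfl | ih | ih
        · exact absurd rfl hbs
        · exact Or.inr (Or.inl (ReflTransGen.head hrcb ih))
        · exact Or.inr (Or.inr (ReflTransGen.head hrcb ih))
  rcases key R (hconn.2 s hsv R hRv) with h | h | h
  · exact absurd h hRne
  · exact Or.inl h
  · exact Or.inr h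

/-- Main lemma for Statement 6, by strong induction on the complement of the
vertex set of `σ`. -/
lemma keyMain {V : Type} [Fintype V] (G : MixedGraph V) (hG : G.IsADMG) (Z : Set V) :
    ∀ n : ℕ, ∀ σ : MixedGraph V, (σ.vertsᶜ).ncard ≤ n →
      σ.IsSOI → σ.IsSubgraph G →
      (∀ v ∈ σ.verts, ¬ σ.IsRoot v → v ∉ Z) →
      ∀ R : V, σ.IsRoot R → R ∉ Z → R ∈ G.AncSet Z →
      ∃ σ' : MixedGraph V, σ'.IsSOI ∧ σ'.IsSubgraph G ∧ σ.verts ⊆ σ'.verts ∧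
        (∀ v ∈ σ'.verts, ¬ σ'.IsRoot v → v ∉ Z) ∧
        σ'.roots \ Z ⊆ (σ.roots \ Z) \ {R} := by
  intro n
  induction n using Nat.strong_induction_on with
  | _ n ihn =>
  intro σ hcard hσ hsub hZ R hR hRZ hRanc
  obtain ⟨z, hzZ, hz⟩ := hRanc
  rcases Relation.ReflTransGen.cases_head hz with rfl | ⟨s, hRs, hsz⟩
  · exact absurd hzZ hRZ
  have hsAnc : s ∈ G.AncSet Z := ⟨z, hzZ, hsz⟩
  have hRne : R ≠ s := by
    rintro rfl
    exact hG.2.1 R hRs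
  by_cases Hs : ∀ ⦃w₁ w₂ : V⦄, σ.dir s w₁ → σ.dir s w₂ → w₁ = w₂
  · -- s is not a fork of σ
    obtain ⟨hSOI, hsubG, hZ', hroots⟩ := lemA G σ hG Z hσ hsub hZ R s hR hRZ hRs Hs
    have hvsub : σ.verts ⊆ (σ.addDir R s).verts := Set.subset_union_left
    by_cases hsZ : s ∈ Z
    · refine ⟨σ.addDir R s, hSOI, hsubG, hvsub, hZ', ?_⟩
      rintro v ⟨hv, hvZ⟩
      rcases hroots hv with ⟨hr, hvR⟩ | hvs
      · exact ⟨⟨hr, hvZ⟩, hvR⟩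
      · rw [Set.mem_singleton_iff] at hvs; subst hvs; exact absurd hsZ hvZ
    · by_cases hsV : s ∈ σ.verts
      · refine ⟨σ.addDir R s, hSOI, hsubG, hvsub, hZ', ?_⟩
        rintro v ⟨hv, hvZ⟩
        rcases hroots hv with ⟨hr, hvR⟩ | hvs
        · exact ⟨⟨hr, hvZ⟩, hvR⟩
        · rw [Set.mem_singleton_iff] at hvs; subst hvs
          refine ⟨⟨⟨hsV, fun w hw => hv.2 w (Or.inl hw)⟩, hvZ⟩, ?_⟩
          rw [Set.mem_singleton_iff]
          exact fun h => hRne h.symm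
      · -- recurse on σ.addDir R s with new root s
        set σ₁ := σ.addDir R s with hσ₁
        have hsroot₁ : σ₁.IsRoot s := by
          refine ⟨Or.inr (Or.inr rfl), ?_⟩
          rintro w (hw | ⟨hw, -⟩)
          · exact hsV (σ.dir_mem hw).1
          · exact hRne hw.symm
        have hstrict : σ₁.vertsᶜ ⊂ σ.vertsᶜ := by
          constructor
          · intro x hx
            simp only [Set.mem_compl_iff] at hx ⊢
            exact fun hxx => hx (Or.inl hxx)
          · intro hsubc
            exact (hsubc (by exact hsV)) (Or.inr (Or.inr rfl))
        have hlt : σ₁.vertsᶜ.ncard < n :=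
          lt_of_lt_of_le (Set.ncard_lt_ncard hstrict (Set.toFinite _)) hcard
        obtain ⟨σ'', hS, hsubG'', hv'', hZ'', hroots''⟩ :=
          ihn _ hlt σ₁ le_rfl hSOI hsubG hZ' s hsroot₁ hsZ hsAnc
        refine ⟨σ'', hS, hsubG'', hvsub.trans hv'', hZ'', ?_⟩
        intro v hvv
        obtain ⟨⟨hr₁, hvZ⟩, hvs⟩ := hroots'' hvv
        rcases hroots hr₁ with ⟨hr, hvR⟩ | h
        · exact ⟨⟨hr, hvZ⟩, hvR⟩
        · exact absurd h hvs
  · -- s is a fork of σ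
    push_neg at Hs
    obtain ⟨w₁, w₂, hd1', hd2', hwne⟩ := Hs
    have hsV : s ∈ σ.verts := (σ.dir_mem hd1').1
    rcases hσ.2.2 s hsV with h | ⟨⟨c₁, c₂, hcne, hd1, hd2, hall⟩, hnin, hnbi⟩
    · exact absurd (h hd1' hd2') hwne
    rcases dichotomy σ hσ.2.1 s c₁ c₂ hall hnin hnbi R hR.1 hsV hRne with h | h
    · obtain ⟨σ', h₁, h₂, h₃, h₄, h₅⟩ :=
        lemB G σ hG Z hσ hsub hZ R s c₂ c₁ hR hRZ hRs hcne.symm hd2 hd1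
          (fun w hw => (hall w hw).symm) hnin hnbi h
      exact ⟨σ', h₁, h₂, h₃, h₄, h₅⟩
    · obtain ⟨σ', h₁, h₂, h₃, h₄, h₅⟩ :=
        lemB G σ hG Z hσ hsub hZ R s c₁ c₂ hR hRZ hRs hcne hd1 hd2 hall hnin hnbi h
      exact ⟨σ', h₁, h₂, h₃, h₄, h₅⟩

end MixedGraph

end Stmt6Aux

/-- add a path to remove a problematic root. -/
theorem stmt6 {V : Type} [Fintype V] (G : MixedGraph V) (hG : G.IsADMG)
    (X Y Z : Set V) (hXV : X ⊆ G.verts) (hYV : Y ⊆ G.verts) (hZV : Z ⊆ G.verts)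
    (hXY : Disjoint X Y) (hXZ : Disjoint X Z) (hYZ : Disjoint Y Z)
    (σ : MixedGraph V) (hσ : σ.IsSOI) (hsub : σ.IsSubgraph G)
    (hX : (σ.verts ∩ X).Nonempty) (hY : (σ.verts ∩ Y).Nonempty)
    (hZ : ∀ v ∈ σ.verts, ¬ σ.IsRoot v → v ∉ Z)
    (R : V) (hR : σ.IsRoot R) (hRZ : R ∉ Z) (hRanc : R ∈ G.AncSet Z) :
    ∃ σ' : MixedGraph V, σ'.IsSOI ∧ σ'.IsSubgraph G ∧
      (σ'.verts ∩ X).Nonempty ∧ (σ'.verts ∩ Y).Nonempty ∧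
      (∀ v ∈ σ'.verts, ¬ σ'.IsRoot v → v ∉ Z) ∧
      σ'.roots \ Z ⊆ (σ.roots \ Z) \ {R} := by
  obtain ⟨σ', h₁, h₂, h₃, h₄, h₅⟩ :=
    MixedGraph.keyMain G hG Z (σ.vertsᶜ.ncard) σ le_rfl hσ hsub hZ R hR hRZ hRanc
  obtain ⟨x, hx1, hx2⟩ := hX
  obtain ⟨y, hy1, hy2⟩ := hY
  exact ⟨σ', h₁, h₂, ⟨x, h₃ hx1, hx2⟩, ⟨y, h₃ hy1, hy2⟩, h₄, h₅⟩
end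

section
/- Let G be an ADMG and let X, Y, Z, R be pairwise disjoint subsets of its vertices. Suppose G contains a structure of interest σ (as a subgraph) such that: σ contains a vertex of X and a vertex of Y; Root(σ) ⊆ Z ∪ X ∪ Y ∪ R; and no non-root vertex of σ lies in Z. If every vertex of R is an ancestor of Z in G, then G contains a structure of interest that connects X and Y under Z. -/
open MixedGraph

section Stmt7Aux

variable {V : Type}

/-- A subgraph of an ADMG is an ADMG. -/
lemma isADMG_of_isSubgraph {H G : MixedGraph V} (hsub : H.IsSubgraph G) (hG : G.IsADMG) :
    H.IsADMG := by
  refine ⟨fun a b hab hba => ?_, fun v hv => hG.2.1 v (hsub.2.1 hv),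
    fun v hv => hG.2.2 v (hsub.2.2 hv)⟩
  exact hG.1 (hsub.2.1 hab) (Relation.ReflTransGen.mono (fun a b h => hsub.2.1 h) _ _ hba)

lemma adj_symm (G : MixedGraph V) : Symmetric G.Adj := by
  intro a b h
  rcases h with h | h | h
  · exact Or.inr (Or.inl h)
  · exact Or.inl h
  · exact Or.inr (Or.inr (G.bi_symm h))

/-- Distance to `Z` along directed edges. -/
noncomputable def distToZ (G : MixedGraph V) (Z : Set V) (v : V) : ℕ :=
  sInf {n | ∃ g : ℕ → V, g 0 = v ∧ g n ∈ Z ∧ ∀ i < n, G.dir (g i) (g (i + 1))}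

lemma exists_fun_of_rtg {G : MixedGraph V} {v z : V} (h : Relation.ReflTransGen G.dir v z) :
    ∃ (n : ℕ) (g : ℕ → V), g 0 = v ∧ g n = z ∧ ∀ i < n, G.dir (g i) (g (i + 1)) := by
  induction h with
  | refl => exact ⟨0, fun _ => v, rfl, rfl, fun i hi => absurd hi (Nat.not_lt_zero i)⟩
  | @tail b c hab hbc ih =>
    obtain ⟨n, g, h0, hn, hs⟩ := ih
    refine ⟨n + 1, fun i => if i ≤ n then g i else c, by simp [h0], by simp, ?_⟩
    intro i hi
    rcases Nat.lt_or_ge i n with h | h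
    · have h1 : i ≤ n := le_of_lt h
      have h2 : i + 1 ≤ n := h
      simp only [h1, h2, if_true]
      exact hs i h
    · have hin : i = n := by omega
      subst hin
      simp only [le_refl, if_true, Nat.not_succ_le_self, if_false]
      exact hn ▸ hbc

lemma rtg_of_fun {G : MixedGraph V} (g : ℕ → V) :
    ∀ n : ℕ, (∀ i < n, G.dir (g i) (g (i + 1))) → Relation.ReflTransGen G.dir (g 0) (g n)
  | 0, _ => .refl
  | n + 1, h =>
    .tail (rtg_of_fun g n fun i hi => h i (Nat.lt_succ_of_lt hi)) (h n (Nat.lt_succ_self n))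

lemma distToZ_step {G : MixedGraph V} {Z : Set V} {v : V}
    (hv : v ∈ G.AncSet Z) (hvZ : v ∉ Z) :
    ∃ w, G.dir v w ∧ w ∈ G.AncSet Z ∧ distToZ G Z w < distToZ G Z v := by
  obtain ⟨z, hz, hrtg⟩ := hv
  obtain ⟨n0, g0, h00, h0n, h0s⟩ := exists_fun_of_rtg hrtg
  have hne : {n | ∃ g : ℕ → V, g 0 = v ∧ g n ∈ Z ∧ ∀ i < n, G.dir (g i) (g (i + 1))}.Nonempty :=
    ⟨n0, g0, h00, h0n ▸ hz, h0s⟩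
  have hmem : distToZ G Z v ∈
      {n | ∃ g : ℕ → V, g 0 = v ∧ g n ∈ Z ∧ ∀ i < n, G.dir (g i) (g (i + 1))} :=
    Nat.sInf_mem hne
  obtain ⟨g, hg0, hgn, hgs⟩ := hmem
  have hpos : 0 < distToZ G Z v := by
    rcases Nat.eq_zero_or_pos (distToZ G Z v) with h | h
    · rw [h] at hgn
      exact absurd (hg0 ▸ hgn) hvZ
    · exact h
  refine ⟨g 1, hg0 ▸ hgs 0 hpos, ?_, ?_⟩
  · refine ⟨g (distToZ G Z v), hgn, ?_⟩
    have := rtg_of_fun (G := G) (fun i => g (i + 1)) (distToZ G Z v - 1)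
      (fun i hi => hgs (i + 1) (by omega))
    simpa [MixedGraph.Anc, Nat.sub_add_cancel hpos] using this
  · have hle : distToZ G Z (g 1) ≤ distToZ G Z v - 1 := by
      apply Nat.sInf_le
      refine ⟨fun i => g (i + 1), rfl, ?_, fun i hi => hgs (i + 1) (by omega)⟩
      simpa [Nat.sub_add_cancel hpos] using hgn
    omega

open Classical in
/-- Measure: total (distance+1) over roots lying in `R'`. -/
noncomputable def meas [Fintype V] (G : MixedGraph V) (Z R' : Set V) (σ : MixedGraph V) : ℕ :=
  ∑ v ∈ Finset.univ.filter (fun v => σ.IsRoot v ∧ v ∈ R'), (distToZ G Z v + 1)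

end Stmt7Aux
section Stmt7Reach

variable {V : Type}

lemma reach_dichotomy {σ : MixedGraph V} {f c v : V}
    (h : Relation.ReflTransGen σ.Adj v f) :
    Relation.ReflTransGen (σ.deleteDir f c).Adj v f ∨
      Relation.ReflTransGen (σ.deleteDir f c).Adj v c := by
  induction h using Relation.ReflTransGen.head_induction_on with
  | refl => exact Or.inl .refl
  | @head a b hab hbf ih =>
    rcases hab with hd | hd | hd
    · by_cases hP : a = f ∧ b = c
      · exact Or.inl (hP.1 ▸ Relation.ReflTransGen.refl)
      · have hadj : (σ.deleteDir f c).Adj a b := Or.inl ⟨hd, hP⟩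
        rcases ih with ih | ih
        · exact Or.inl (.head hadj ih)
        · exact Or.inr (.head hadj ih)
    · by_cases hP : b = f ∧ a = c
      · exact Or.inr (hP.2 ▸ Relation.ReflTransGen.refl)
      · have hadj : (σ.deleteDir f c).Adj a b := Or.inr (Or.inl ⟨hd, hP⟩)
        rcases ih with ih | ih
        · exact Or.inl (.head hadj ih)
        · exact Or.inr (.head hadj ih)
    · have hadj : (σ.deleteDir f c).Adj a b := Or.inr (Or.inr hd)
      rcases ih with ih | ih
      · exact Or.inl (.head hadj ih)
      · exact Or.inr (.head hadj ih)

lemma reach_avoid {σ : MixedGraph V} {f c c₂ : V}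
    (hin : ∀ u, ¬ σ.dir u f) (hbi : ∀ u, ¬ σ.bi f u)
    (hout : ∀ u, σ.dir f u → u = c ∨ u = c₂) :
    ∀ v, Relation.ReflTransGen (σ.deleteDir f c).Adj v f → v ≠ f →
      Relation.ReflTransGen (σ.deleteDir f c₂).Adj v c₂ := by
  intro v h
  induction h using Relation.ReflTransGen.head_induction_on with
  | refl => intro h; exact absurd rfl h
  | @head a b hab hbf ih =>
    intro hne
    by_cases hb : b = f
    · subst hb
      rcases hab with ⟨hd, _⟩ | ⟨hd, hP⟩ | hd
      · exact absurd hd (hin a)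
      · have ha : a = c ∨ a = c₂ := hout a hd
        have hac : a ≠ c := fun h => hP ⟨rfl, h⟩
        have : a = c₂ := by tauto
        exact this ▸ Relation.ReflTransGen.refl
      · exact absurd (σ.bi_symm hd) (hbi a)
    · have hrest := ih hb
      have hadj : (σ.deleteDir f c₂).Adj a b := by
        rcases hab with ⟨hd, _⟩ | ⟨hd, _⟩ | hd
        · exact Or.inl ⟨hd, fun h => hne h.1⟩
        · exact Or.inr (Or.inl ⟨hd, fun h => hb h.1⟩)
        · exact Or.inr (Or.inr hd)
      exact .head hadj hrest

lemma op2_reach {σ : MixedGraph V} {r w c : V} (hconn : σ.Connected) (hwv : w ∈ σ.verts)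
    (hrc : Relation.ReflTransGen (σ.deleteDir w c).Adj r c) :
    ∀ v ∈ σ.verts,
      Relation.ReflTransGen ((σ.deleteDir w c).addDir r w).Adj v w := by
  intro v hv
  set σ' := (σ.deleteDir w c).addDir r w with hσ'
  have hmono : ∀ a b, (σ.deleteDir w c).Adj a b → σ'.Adj a b := by
    intro a b h
    rcases h with h | h | h
    · exact Or.inl (Or.inl h)
    · exact Or.inr (Or.inl (Or.inl h))
    · exact Or.inr (Or.inr h)
  have hsymm : Symmetric (Relation.ReflTransGen σ'.Adj) := by
    haveI : Std.Symm σ'.Adj := ⟨fun x y hxy => adj_symm σ' hxy⟩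
    exact fun a b h => Std.Symm.symm a b h
  have hvw : Relation.ReflTransGen σ.Adj v w := hconn.2 v hv w hwv
  rcases reach_dichotomy (c := c) hvw with h | h
  · exact Relation.ReflTransGen.mono hmono _ _ h
  · refine (Relation.ReflTransGen.mono hmono _ _ h).trans ((hsymm (Relation.ReflTransGen.mono hmono _ _ hrc)).trans ?_)
    exact Relation.ReflTransGen.single (Or.inl (Or.inr ⟨rfl, rfl⟩))

end Stmt7Reach
section Stmt7Ops

variable {V : Type}

/-- Operation 1 : attach the edge `r → w` to `σ`, where `r` is a root of `σ` and
`w` is either fresh or a non-fork vertex of `σ`. -/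
lemma op1 {G σ : MixedGraph V} (hG : G.IsADMG) (hσ : σ.IsSOI) (hsub : σ.IsSubgraph G)
    {r w : V} (hr : σ.IsRoot r) (hrw : G.dir r w)
    (hw : w ∉ σ.verts ∨ ∀ ⦃w₁ w₂ : V⦄, σ.dir w w₁ → σ.dir w w₂ → w₁ = w₂) :
    (σ.addDir r w).IsSOI ∧ (σ.addDir r w).IsSubgraph G ∧
      σ.verts ⊆ (σ.addDir r w).verts ∧
      (∀ v, (σ.addDir r w).IsRoot v → (σ.IsRoot v ∧ v ≠ r) ∨ v = w) ∧
      (∀ v ∈ (σ.addDir r w).verts, ¬ (σ.addDir r w).IsRoot v →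
        (v ∈ σ.verts ∧ ¬ σ.IsRoot v) ∨ v = r) := by
  have hrv : r ∈ σ.verts := hr.1
  set σ' := σ.addDir r w with hσ'
  have hvmem : ∀ a, a ∈ σ'.verts ↔ a ∈ σ.verts ∨ a = r ∨ a = w := fun a => by
    rw [show σ'.verts = σ.verts ∪ {r, w} from rfl, Set.mem_union, Set.mem_insert_iff,
      Set.mem_singleton_iff]
  have hsub' : σ'.IsSubgraph G := by
    refine ⟨?_, ?_, hsub.2.2⟩
    · intro a ha
      rcases (hvmem a).1 ha with ha | rfl | rfl
      · exact hsub.1 ha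
      · exact hsub.1 hrv
      · exact (G.dir_mem hrw).2
    · rintro a b (h | ⟨rfl, rfl⟩)
      · exact hsub.2.1 h
      · exact hrw
  have hADMG : σ'.IsADMG := isADMG_of_isSubgraph hsub' hG
  have hmono : ∀ a b, σ.Adj a b → σ'.Adj a b := by
    intro a b h
    rcases h with h | h | h
    · exact Or.inl (Or.inl h)
    · exact Or.inr (Or.inl (Or.inl h))
    · exact Or.inr (Or.inr h)
  have hconn : σ'.Connected := by
    have hsymm : Symmetric (Relation.ReflTransGen σ'.Adj) := by
      haveI : Std.Symm σ'.Adj := ⟨fun x y hxy => adj_symm σ' hxy⟩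
      exact fun a b h => Std.Symm.symm a b h
    have hhub : ∀ a ∈ σ'.verts, Relation.ReflTransGen σ'.Adj a r := by
      intro a ha
      rcases (hvmem a).1 ha with ha | rfl | rfl
      · exact Relation.ReflTransGen.mono hmono _ _ (hσ.2.1.2 a ha r hrv)
      · exact .refl
      · exact Relation.ReflTransGen.single (Or.inr (Or.inl (Or.inr ⟨rfl, rfl⟩)))
    refine ⟨⟨r, (hvmem r).2 (Or.inr (Or.inl rfl))⟩, ?_⟩
    intro a ha b hb
    exact (hhub a ha).trans (hsymm (hhub b hb))
  have hdeg : ∀ v ∈ σ'.verts,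
      (∀ ⦃w₁ w₂ : V⦄, σ'.dir v w₁ → σ'.dir v w₂ → w₁ = w₂) ∨
      ((∃ w₁ w₂, w₁ ≠ w₂ ∧ σ'.dir v w₁ ∧ σ'.dir v w₂ ∧
          ∀ u, σ'.dir v u → u = w₁ ∨ u = w₂) ∧
        (∀ u, ¬ σ'.dir u v) ∧ (∀ u, ¬ σ'.bi v u)) := by
    intro v hv
    by_cases hvr : v = r
    · subst hvr
      left
      rintro w₁ w₂ (h | ⟨-, rfl⟩) (h' | ⟨-, rfl⟩)
      · exact absurd h (hr.2 w₁)
      · exact absurd h (hr.2 w₁)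
      · exact absurd h' (hr.2 w₂)
      · rfl
    · have hdir_eq : ∀ u, σ'.dir v u ↔ σ.dir v u := by
        intro u
        constructor
        · rintro (h | ⟨rfl, rfl⟩)
          · exact h
          · exact absurd rfl hvr
        · exact Or.inl
      by_cases hvs : v ∈ σ.verts
      · rcases hσ.2.2 v hvs with hb | ⟨⟨w₁, w₂, hne, h1, h2, hall⟩, hnin, hnbi⟩
        · left
          intro u₁ u₂ a b
          exact hb ((hdir_eq u₁).1 a) ((hdir_eq u₂).1 b)
        · right
          refine ⟨⟨w₁, w₂, hne, Or.inl h1, Or.inl h2, fun u hu => hall u ((hdir_eq u).1 hu)⟩,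
            ?_, hnbi⟩
          rintro u (h | ⟨rfl, hvw⟩)
          · exact hnin u h
          · rcases hw with hw | hw
            · exact hw (hvw ▸ hvs)
            · exact hne (hw (hvw ▸ h1) (hvw ▸ h2))
      · left
        intro u₁ u₂ a _
        exact absurd (σ.dir_mem ((hdir_eq u₁).1 a)).1 hvs
  refine ⟨⟨hADMG, hconn, hdeg⟩, hsub', fun a ha => (hvmem a).2 (Or.inl ha), ?_, ?_⟩
  · intro v hv
    by_cases hvw : v = w
    · exact Or.inr hvw
    · left
      have hvr : v ≠ r := by
        rintro rfl
        exact hv.2 w (Or.inr ⟨rfl, rfl⟩)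
      have hvs : v ∈ σ.verts := by
        rcases (hvmem v).1 hv.1 with h | h | h
        · exact h
        · exact absurd h hvr
        · exact absurd h hvw
      exact ⟨⟨hvs, fun u hu => hv.2 u (Or.inl hu)⟩, hvr⟩
  · intro v hv hnv
    by_cases hvr : v = r
    · exact Or.inr hvr
    · left
      have hex : ∃ u, σ'.dir v u := by
        by_contra h
        push_neg at h
        exact hnv ⟨hv, h⟩
      obtain ⟨u, hu⟩ := hex
      rcases hu with hu | ⟨rfl, rfl⟩
      · exact ⟨(σ.dir_mem hu).1, fun hroot => hroot.2 u hu⟩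
      · exact absurd rfl hvr

/-- Operation 2 : `w` is a fork of `σ`; delete the fork edge `w → c` and attach `r → w`. -/
lemma op2 {G σ : MixedGraph V} (hG : G.IsADMG) (hσ : σ.IsSOI) (hsub : σ.IsSubgraph G)
    {r w c w₁ w₂ : V} (hr : σ.IsRoot r) (hrw : G.dir r w) (hwv : w ∈ σ.verts)
    (hne : w₁ ≠ w₂) (h1 : σ.dir w w₁) (h2 : σ.dir w w₂)
    (hall : ∀ u, σ.dir w u → u = w₁ ∨ u = w₂)
    (hnin : ∀ u, ¬ σ.dir u w) (hnbi : ∀ u, ¬ σ.bi w u)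
    (hc : c = w₁ ∨ c = w₂)
    (hreach : ∀ v ∈ σ.verts,
      Relation.ReflTransGen ((σ.deleteDir w c).addDir r w).Adj v w) :
    ((σ.deleteDir w c).addDir r w).IsSOI ∧ ((σ.deleteDir w c).addDir r w).IsSubgraph G ∧
      σ.verts ⊆ ((σ.deleteDir w c).addDir r w).verts ∧
      (∀ v, ((σ.deleteDir w c).addDir r w).IsRoot v → σ.IsRoot v ∧ v ≠ r) ∧
      (∀ v ∈ ((σ.deleteDir w c).addDir r w).verts, ¬ ((σ.deleteDir w c).addDir r w).IsRoot v →
        (v ∈ σ.verts ∧ ¬ σ.IsRoot v) ∨ v = r) := by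
  have hrv : r ∈ σ.verts := hr.1
  have hrw_ne : r ≠ w := by
    rintro rfl
    exact hr.2 w₁ h1
  set σ' := (σ.deleteDir w c).addDir r w with hσ'
  have hdir' : ∀ a b, σ'.dir a b ↔ (σ.dir a b ∧ ¬(a = w ∧ b = c)) ∨ (a = r ∧ b = w) :=
    fun a b => Iff.rfl
  have hbi' : ∀ a b, σ'.bi a b ↔ σ.bi a b := fun a b => Iff.rfl
  have hvmem : ∀ a, a ∈ σ'.verts ↔ a ∈ σ.verts ∨ a = r ∨ a = w := fun a => by
    rw [show σ'.verts = σ.verts ∪ {r, w} from rfl, Set.mem_union, Set.mem_insert_iff,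
      Set.mem_singleton_iff]
  have hvmem' : ∀ a, a ∈ σ'.verts ↔ a ∈ σ.verts := by
    intro a
    rw [hvmem a]
    constructor
    · rintro (h | rfl | rfl)
      · exact h
      · exact hrv
      · exact hwv
    · exact Or.inl
  have hsub' : σ'.IsSubgraph G := by
    refine ⟨fun a ha => hsub.1 ((hvmem' a).1 ha), ?_, hsub.2.2⟩
    intro a b h
    rcases (hdir' a b).1 h with ⟨h, -⟩ | ⟨rfl, rfl⟩
    · exact hsub.2.1 h
    · exact hrw
  have hADMG : σ'.IsADMG := isADMG_of_isSubgraph hsub' hG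
  have hconn : σ'.Connected := by
    have hsymm : Symmetric (Relation.ReflTransGen σ'.Adj) := by
      haveI : Std.Symm σ'.Adj := ⟨fun x y hxy => adj_symm σ' hxy⟩
      exact fun a b h => Std.Symm.symm a b h
    refine ⟨⟨w, (hvmem' w).2 hwv⟩, ?_⟩
    intro a ha b hb
    exact (hreach a ((hvmem' a).1 ha)).trans (hsymm (hreach b ((hvmem' b).1 hb)))
  have hdeg : ∀ v ∈ σ'.verts,
      (∀ ⦃u₁ u₂ : V⦄, σ'.dir v u₁ → σ'.dir v u₂ → u₁ = u₂) ∨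
      ((∃ u₁ u₂, u₁ ≠ u₂ ∧ σ'.dir v u₁ ∧ σ'.dir v u₂ ∧
          ∀ u, σ'.dir v u → u = u₁ ∨ u = u₂) ∧
        (∀ u, ¬ σ'.dir u v) ∧ (∀ u, ¬ σ'.bi v u)) := by
    intro v hv
    by_cases hvr : v = r
    · subst hvr
      left
      rintro u₁ u₂ (⟨h, -⟩ | ⟨-, rfl⟩) (⟨h', -⟩ | ⟨-, rfl⟩)
      · exact absurd h (hr.2 u₁)
      · exact absurd h (hr.2 u₁)
      · exact absurd h' (hr.2 u₂)
      · rfl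
    · by_cases hvw : v = w
      · subst hvw
        left
        have key : ∀ u, σ'.dir v u → u = w₂ ∨ u = w₁ := by
          rintro u (⟨h, -⟩ | ⟨hq, -⟩)
          · rcases hall u h with rfl | rfl
            · exact Or.inr rfl
            · exact Or.inl rfl
          · exact absurd hq.symm hrw_ne
        have key2 : ∀ u, σ'.dir v u → u ≠ c := by
          rintro u (⟨-, hP⟩ | ⟨hq, -⟩)
          · exact fun h => hP ⟨rfl, h⟩
          · exact absurd hq.symm hrw_ne
        intro u₁ u₂ a b
        rcases hc with rfl | rfl
        · have e1 : u₁ = w₂ := by rcases key u₁ a with h | h; exact h; exact absurd h (key2 u₁ a)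
          have e2 : u₂ = w₂ := by rcases key u₂ b with h | h; exact h; exact absurd h (key2 u₂ b)
          rw [e1, e2]
        · have e1 : u₁ = w₁ := by
            rcases key u₁ a with h | h
            · exact absurd h (key2 u₁ a)
            · exact h
          have e2 : u₂ = w₁ := by
            rcases key u₂ b with h | h
            · exact absurd h (key2 u₂ b)
            · exact h
          rw [e1, e2]
      · have hdir_eq : ∀ u, σ'.dir v u ↔ σ.dir v u := by
          intro u
          constructor
          · rintro (⟨h, -⟩ | ⟨rfl, rfl⟩)
            · exact h
            · exact absurd rfl hvr
          · intro h
            exact Or.inl ⟨h, fun hq => hvw hq.1⟩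
        have hvs : v ∈ σ.verts := (hvmem' v).1 hv
        rcases hσ.2.2 v hvs with hb | ⟨⟨u₁, u₂, hne', hd1, hd2, hall'⟩, hnin', hnbi'⟩
        · left
          intro a₁ a₂ ha hb'
          exact hb ((hdir_eq a₁).1 ha) ((hdir_eq a₂).1 hb')
        · right
          refine ⟨⟨u₁, u₂, hne', (hdir_eq u₁).2 hd1, (hdir_eq u₂).2 hd2,
            fun u hu => hall' u ((hdir_eq u).1 hu)⟩, ?_, hnbi'⟩
          rintro u (⟨h, -⟩ | ⟨rfl, hvw'⟩)
          · exact hnin' u h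
          · exact hvw hvw'
  have hroot' : ∀ v, σ'.IsRoot v → σ.IsRoot v ∧ v ≠ r := by
    intro v hv
    have hvr : v ≠ r := by
      rintro rfl
      exact hv.2 w (Or.inr ⟨rfl, rfl⟩)
    have hvs : v ∈ σ.verts := (hvmem' v).1 hv.1
    refine ⟨⟨hvs, ?_⟩, hvr⟩
    intro u hu
    by_cases hP : v = w ∧ u = c
    · obtain ⟨rfl, rfl⟩ := hP
      rcases hc with rfl | rfl
      · exact hv.2 w₂ (Or.inl ⟨h2, fun hq => hne hq.2.symm⟩)
      · exact hv.2 w₁ (Or.inl ⟨h1, fun hq => hne hq.2⟩)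
    · exact hv.2 u (Or.inl ⟨hu, hP⟩)
  refine ⟨⟨hADMG, hconn, hdeg⟩, hsub', fun a ha => (hvmem' a).2 ha, hroot', ?_⟩
  · intro v hv hnv
    by_cases hvr : v = r
    · exact Or.inr hvr
    · left
      have hex : ∃ u, σ'.dir v u := by
        by_contra h
        push_neg at h
        exact hnv ⟨hv, h⟩
      obtain ⟨u, hu⟩ := hex
      rcases hu with ⟨hu, -⟩ | ⟨rfl, rfl⟩
      · exact ⟨(σ.dir_mem hu).1, fun hroot => hroot.2 u hu⟩
      · exact absurd rfl hvr

end Stmt7Ops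
section Stmt7Step

variable {V : Type}

lemma sum_lt_of_subset_insert [DecidableEq V] {f : V → ℕ} {S S' : Finset V} {r w : V}
    (hrS : r ∈ S) (hsub : S' ⊆ insert w (S.erase r)) (hlt : f w < f r) :
    ∑ x ∈ S', f x < ∑ x ∈ S, f x := by
  have h1 := Finset.sum_le_sum_of_subset (f := f) hsub
  have h2 : ∑ x ∈ insert w (S.erase r), f x ≤ f w + ∑ x ∈ S.erase r, f x := by
    by_cases hw : w ∈ S.erase r
    · rw [Finset.insert_eq_self.2 hw]
      exact Nat.le_add_left _ _
    · rw [Finset.sum_insert hw]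
  have h3 := Finset.sum_erase_add S f hrS
  omega

lemma sum_lt_of_subset_erase [DecidableEq V] {f : V → ℕ} {S S' : Finset V} {r : V}
    (hrS : r ∈ S) (hpos : 0 < f r) (hsub : S' ⊆ S.erase r) :
    ∑ x ∈ S', f x < ∑ x ∈ S, f x := by
  have h1 := Finset.sum_le_sum_of_subset (f := f) hsub
  have h3 := Finset.sum_erase_add S f hrS
  omega

/-- One improvement step: fix a single root lying in `R'`. -/
lemma stmt7_step [Fintype V] {G σ : MixedGraph V} (hG : G.IsADMG) {Z R' W : Set V}
    (hAnc : G.AncSet Z ⊆ W ∪ R') (hR'anc : R' ⊆ G.AncSet Z) (hR'Z : ∀ v ∈ R', v ∉ Z)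
    (hσ : σ.IsSOI) (hsub : σ.IsSubgraph G)
    (hroots : σ.roots ⊆ W ∪ R') (hZinv : ∀ v ∈ σ.verts, ¬ σ.IsRoot v → v ∉ Z)
    {r : V} (hr : σ.IsRoot r) (hrR : r ∈ R') :
    ∃ σ' : MixedGraph V, σ'.IsSOI ∧ σ'.IsSubgraph G ∧ σ.verts ⊆ σ'.verts ∧
      σ'.roots ⊆ W ∪ R' ∧ (∀ v ∈ σ'.verts, ¬ σ'.IsRoot v → v ∉ Z) ∧
      meas G Z R' σ' < meas G Z R' σ := by
  classical
  obtain ⟨w, hrw, hwAnc, hdlt⟩ := distToZ_step (hR'anc hrR) (hR'Z r hrR)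
  by_cases hcase : w ∉ σ.verts ∨ ∀ ⦃w₁ w₂ : V⦄, σ.dir w w₁ → σ.dir w w₂ → w₁ = w₂
  · obtain ⟨hSOI', hsub', hverts', hroot', hnonroot'⟩ := op1 hG hσ hsub hr hrw hcase
    refine ⟨σ.addDir r w, hSOI', hsub', hverts', ?_, ?_, ?_⟩
    · intro v hv
      rcases hroot' v hv with ⟨hv', _⟩ | rfl
      · exact hroots hv'
      · exact hAnc hwAnc
    · intro v hv hnv
      rcases hnonroot' v hv hnv with ⟨hvs, hnr⟩ | rfl
      · exact hZinv v hvs hnr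
      · exact hR'Z v hrR
    · unfold meas
      refine sum_lt_of_subset_insert (w := w)
        (Finset.mem_filter.2 ⟨Finset.mem_univ r, hr, hrR⟩) ?_ (by omega)
      intro v hv
      have hv' := Finset.mem_filter.1 hv
      rcases hroot' v hv'.2.1 with ⟨h1, h2⟩ | rfl
      · exact Finset.mem_insert_of_mem
          (Finset.mem_erase.2 ⟨h2, Finset.mem_filter.2 ⟨Finset.mem_univ v, h1, hv'.2.2⟩⟩)
      · exact Finset.mem_insert_self _ _
  · push_neg at hcase
    obtain ⟨hwv, hnb1⟩ := hcase
    rcases hσ.2.2 w hwv with hb1 | ⟨⟨w₁, w₂, hne12, h1, h2, hall⟩, hnin, hnbi⟩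
    · obtain ⟨a1, a2, hda, hdb, hne0⟩ := hnb1
      exact absurd (hb1 hda hdb) hne0
    · have hrv := hr.1
      have hrw_ne : r ≠ w := by
        rintro rfl
        exact hr.2 w₁ h1
      have hrwadj : Relation.ReflTransGen σ.Adj r w := hσ.2.1.2 r hrv w hwv
      obtain ⟨c, hc, hrc⟩ : ∃ c, (c = w₁ ∨ c = w₂) ∧
          Relation.ReflTransGen (σ.deleteDir w c).Adj r c := by
        rcases reach_dichotomy (c := w₁) hrwadj with h | h
        · exact ⟨w₂, Or.inr rfl, reach_avoid hnin hnbi hall r h hrw_ne⟩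
        · exact ⟨w₁, Or.inl rfl, h⟩
      have hreach := op2_reach hσ.2.1 hwv hrc
      obtain ⟨hSOI', hsub', hverts', hroot', hnonroot'⟩ :=
        op2 hG hσ hsub hr hrw hwv hne12 h1 h2 hall hnin hnbi hc hreach
      refine ⟨(σ.deleteDir w c).addDir r w, hSOI', hsub', hverts', ?_, ?_, ?_⟩
      · intro v hv
        exact hroots (hroot' v hv).1
      · intro v hv hnv
        rcases hnonroot' v hv hnv with ⟨hvs, hnr⟩ | rfl
        · exact hZinv v hvs hnr
        · exact hR'Z v hrR
      · unfold meas
        refine sum_lt_of_subset_erase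
          (Finset.mem_filter.2 ⟨Finset.mem_univ r, hr, hrR⟩) (by omega) ?_
        intro v hv
        have hv' := Finset.mem_filter.1 hv
        obtain ⟨h1', h2'⟩ := hroot' v hv'.2.1
        exact Finset.mem_erase.2 ⟨h2', Finset.mem_filter.2 ⟨Finset.mem_univ v, h1', hv'.2.2⟩⟩

end Stmt7Step
section Stmt7Main

variable {V : Type}

lemma stmt7_main [Fintype V] {G : MixedGraph V} (hG : G.IsADMG) (X Y Z R' : Set V)
    (hAnc : G.AncSet Z ⊆ (Z ∪ X ∪ Y) ∪ R') (hR'anc : R' ⊆ G.AncSet Z)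
    (hR'Z : ∀ v ∈ R', v ∉ Z) :
    ∀ (n : ℕ) (σ : MixedGraph V), meas G Z R' σ ≤ n → σ.IsSOI → σ.IsSubgraph G →
      (σ.verts ∩ X).Nonempty → (σ.verts ∩ Y).Nonempty →
      σ.roots ⊆ (Z ∪ X ∪ Y) ∪ R' → (∀ v ∈ σ.verts, ¬ σ.IsRoot v → v ∉ Z) →
      ∃ σ' : MixedGraph V, σ'.IsSOI ∧ σ'.IsSubgraph G ∧ σ'.Connects X Y Z := by
  intro n
  induction n with
  | zero =>
    intro σ hm hσ hsub hX hY hroots hZinv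
    refine ⟨σ, hσ, hsub, hX, hY, ?_, hZinv⟩
    have hS : ∀ v, ¬ (σ.IsRoot v ∧ v ∈ R') := by
      classical
      intro v hv
      have h1 : distToZ G Z v + 1 ≤ meas G Z R' σ := by
        unfold meas
        refine Finset.single_le_sum (f := fun v => distToZ G Z v + 1)
          (fun i _ => Nat.zero_le _) ?_
        exact Finset.mem_filter.2 ⟨Finset.mem_univ v, hv⟩
      omega
    intro v hv
    have hv' : σ.IsRoot v := hv
    rcases hroots hv with h | h
    · rcases h with (h | h) | h
      · exact Or.inr h
      · exact Or.inl (Or.inl h)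
      · exact Or.inl (Or.inr h)
    · exact absurd ⟨hv', h⟩ (hS v)
  | succ n ih =>
    intro σ hm hσ hsub hX hY hroots hZinv
    by_cases hS : ∃ r, σ.IsRoot r ∧ r ∈ R'
    · obtain ⟨r, hr, hrR⟩ := hS
      obtain ⟨σ', hSOI', hsub', hverts', hroots', hZinv', hlt⟩ :=
        stmt7_step hG hAnc hR'anc hR'Z hσ hsub hroots hZinv hr hrR
      obtain ⟨x, hx1, hx2⟩ := hX
      obtain ⟨y, hy1, hy2⟩ := hY
      exact ih σ' (by omega) hSOI' hsub' ⟨x, hverts' hx1, hx2⟩ ⟨y, hverts' hy1, hy2⟩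
        hroots' hZinv'
    · push_neg at hS
      refine ⟨σ, hσ, hsub, hX, hY, ?_, hZinv⟩
      intro v hv
      have hv' : σ.IsRoot v := hv
      rcases hroots hv with h | h
      · rcases h with (h | h) | h
        · exact Or.inr h
        · exact Or.inl (Or.inl h)
        · exact Or.inl (Or.inr h)
      · exact absurd h (hS v hv')

end Stmt7Main
/-- corollary: add paths to remove all problematic roots. -/
theorem stmt7 {V : Type} [Fintype V] (G : MixedGraph V) (hG : G.IsADMG)
    (X Y Z R : Set V)
    (hXV : X ⊆ G.verts) (hYV : Y ⊆ G.verts) (hZV : Z ⊆ G.verts) (hRV : R ⊆ G.verts)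
    (hXY : Disjoint X Y) (hXZ : Disjoint X Z) (hXR : Disjoint X R)
    (hYZ : Disjoint Y Z) (hYR : Disjoint Y R) (hZR : Disjoint Z R)
    (σ : MixedGraph V) (hσ : σ.IsSOI) (hsub : σ.IsSubgraph G)
    (hX : (σ.verts ∩ X).Nonempty) (hY : (σ.verts ∩ Y).Nonempty)
    (hroots : σ.roots ⊆ Z ∪ X ∪ Y ∪ R)
    (hZ : ∀ v ∈ σ.verts, ¬ σ.IsRoot v → v ∉ Z)
    (hanc : ∀ r ∈ R, r ∈ G.AncSet Z) :
    ∃ σ' : MixedGraph V, σ'.IsSOI ∧ σ'.IsSubgraph G ∧ σ'.Connects X Y Z := by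
  set R' : Set V := G.AncSet Z \ (Z ∪ X ∪ Y) with hR'
  have hAnc : G.AncSet Z ⊆ (Z ∪ X ∪ Y) ∪ R' := by
    intro v hv
    by_cases h : v ∈ Z ∪ X ∪ Y
    · exact Or.inl h
    · exact Or.inr ⟨hv, h⟩
  have hR'anc : R' ⊆ G.AncSet Z := Set.diff_subset
  have hR'Z : ∀ v ∈ R', v ∉ Z := by
    intro v hv hz
    exact hv.2 (Or.inl (Or.inl hz))
  have hroots' : σ.roots ⊆ (Z ∪ X ∪ Y) ∪ R' := by
    intro v hv
    rcases hroots hv with h | h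
    · exact Or.inl h
    · have hvnot : v ∉ Z ∪ X ∪ Y := by
        intro hm
        simp only [Set.mem_union] at hm
        rcases hm with (h1 | h1) | h1
        · exact Set.disjoint_left.mp hZR h1 h
        · exact Set.disjoint_left.mp hXR h1 h
        · exact Set.disjoint_left.mp hYR h1 h
      exact Or.inr ⟨hanc v h, hvnot⟩
  exact stmt7_main hG X Y Z R' hAnc hR'anc hR'Z (meas G Z R' σ) σ le_rfl hσ hsub hX hY
    hroots' hZ
end
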